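/- arXiv:1803.08349 — 6 statements merged into one kernel-verified Lean document; each statement's English description precedes it below -/
import Mathlib

section
/- Let q > 1 be a real number and 0 < δ < 1. Then the family n ↦ (1 + δ^n q^{−n})^{s_n(q)/n} (n ≥ 1) is multipliable, and (1 + δ/q)^{−1} · ∏_{n=1}^∞ (1 + δ^n q^{−n})^{s_n(q)/n} = (1 − δ² q^{−1})/(1 − δ). -/
open Finset Real

/-- `s 1 (q) = q + 1` and `s n (q) = ∑_{d ∣ n} μ(n/d) q^d` for `n ≠ 1`.
(For `n = 0` the sum over divisors is empty, so `sFun q 0 = 0`.) -/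
noncomputable def sFun (q : ℝ) (n : ℕ) : ℝ :=
  if n = 1 then q + 1
  else ∑ d ∈ n.divisors, (ArithmeticFunction.moebius (n / d) : ℝ) * q ^ d

noncomputable def sHat (q : ℝ) (n : ℕ) : ℝ :=
  ∑ d ∈ n.divisors, (ArithmeticFunction.moebius (n / d) : ℝ) * q ^ d

lemma sFun_eq_sHat_add (q : ℝ) (n : ℕ) :
    sFun q n = sHat q n + (if n = 1 then 1 else 0) := by
  rcases eq_or_ne n 1 with rfl | h
  · simp [sFun, sHat]
  · simp [sFun, sHat, h]

lemma sum_divisors_sHat (q : ℝ) {m : ℕ} (hm : 0 < m) :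
    ∑ d ∈ m.divisors, sHat q d = q ^ m := by
  refine (ArithmeticFunction.sum_eq_iff_sum_smul_moebius_eq
      (f := sHat q) (g := fun n : ℕ => q ^ n)).mpr ?_ m hm
  intro n hn
  rw [Nat.sum_divisorsAntidiagonal'
    (f := fun a b => (ArithmeticFunction.moebius a : ℤ) • q ^ b)]
  simp only [zsmul_eq_mul, sHat]

lemma key_even (q : ℝ) (m : ℕ) (hm : m ≠ 0) :
    ∑ p ∈ m.divisorsAntidiagonal, (if 2 ∣ p.2 then 2 * sHat q p.1 else 0)
      = if 2 ∣ m then 2 * q ^ (m / 2) else 0 := by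
  by_cases hm2 : 2 ∣ m
  · obtain ⟨t, rfl⟩ := hm2
    have ht : t ≠ 0 := by omega
    rw [if_pos ⟨t, rfl⟩]
    rw [← Finset.sum_filter]
    have h2 : (2 * t) / 2 = t := by omega
    rw [h2]
    rw [show 2 * q ^ t = ∑ p ∈ t.divisorsAntidiagonal, 2 * sHat q p.1 by
      rw [← Finset.mul_sum,
        Nat.sum_divisorsAntidiagonal (f := fun a b => sHat q a),
        sum_divisors_sHat q (Nat.pos_of_ne_zero ht)]]
    refine Finset.sum_nbij' (fun p => (p.1, p.2 / 2)) (fun p => (p.1, 2 * p.2))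
      ?_ ?_ ?_ ?_ ?_
    · rintro ⟨a, b⟩ hp
      simp only [Finset.mem_filter, Nat.mem_divisorsAntidiagonal] at hp
      obtain ⟨⟨hab, -⟩, k, rfl⟩ := hp
      simp only [Nat.mem_divisorsAntidiagonal]
      have hk : 2 * k / 2 = k := by omega
      rw [hk]
      have h2 : 2 * (a * k) = 2 * t := by rw [← hab]; ring
      exact ⟨by omega, ht⟩
    · rintro ⟨a, b⟩ hp
      simp only [Nat.mem_divisorsAntidiagonal] at hp
      simp only [Finset.mem_filter, Nat.mem_divisorsAntidiagonal]
      refine ⟨⟨by rw [show a * (2 * b) = 2 * (a * b) by ring, hp.1], by omega⟩, ⟨b, rfl⟩⟩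
    · rintro ⟨a, b⟩ hp
      simp only [Finset.mem_filter, Nat.mem_divisorsAntidiagonal] at hp
      obtain ⟨-, k, rfl⟩ := hp
      simp only [Prod.mk.injEq]
      exact ⟨trivial, by omega⟩
    · rintro ⟨a, b⟩ hp
      simp only [Prod.mk.injEq]
      exact ⟨trivial, by omega⟩
    · rintro ⟨a, b⟩ hp
      rfl
  · rw [if_neg hm2]
    refine Finset.sum_eq_zero ?_
    rintro ⟨a, b⟩ hp
    rw [Nat.mem_divisorsAntidiagonal] at hp
    rw [if_neg]
    rintro ⟨k, rfl⟩
    exact hm2 ⟨a * k, by rw [← hp.1]; ring⟩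

lemma key_sum (q : ℝ) (m : ℕ) (hm : m ≠ 0) :
    ∑ p ∈ m.divisorsAntidiagonal, sHat q p.1 * (-1 : ℝ) ^ (p.2 + 1)
      = q ^ m - (if 2 ∣ m then 2 * q ^ (m / 2) else 0) := by
  have split : ∀ p ∈ m.divisorsAntidiagonal,
      sHat q p.1 * (-1 : ℝ) ^ (p.2 + 1)
        = sHat q p.1 - (if 2 ∣ p.2 then 2 * sHat q p.1 else 0) := by
    rintro ⟨a, b⟩ hp
    simp only
    rcases Nat.even_or_odd b with hb | hb
    · rw [if_pos hb.two_dvd, pow_succ, hb.neg_one_pow]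
      ring
    · rw [if_neg (by simpa [Nat.two_dvd_ne_zero] using Nat.odd_iff.mp hb),
        pow_succ, hb.neg_one_pow]
      ring
  rw [Finset.sum_congr rfl split, Finset.sum_sub_distrib,
    Nat.sum_divisorsAntidiagonal (f := fun a b => sHat q a),
    sum_divisors_sHat q (Nat.pos_of_ne_zero hm), key_even q m hm]

lemma key_full (q : ℝ) (m : ℕ) (hm : m ≠ 0) :
    ∑ p ∈ m.divisorsAntidiagonal, sFun q p.1 * (-1 : ℝ) ^ (p.2 + 1)
      = q ^ m - (if 2 ∣ m then 2 * q ^ (m / 2) else 0) + (-1 : ℝ) ^ (m + 1) := by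
  have h1 : ∑ p ∈ m.divisorsAntidiagonal, sFun q p.1 * (-1 : ℝ) ^ (p.2 + 1)
      = ∑ p ∈ m.divisorsAntidiagonal, sHat q p.1 * (-1 : ℝ) ^ (p.2 + 1)
        + ∑ p ∈ m.divisorsAntidiagonal, (if p.1 = 1 then (-1 : ℝ) ^ (p.2 + 1) else 0) := by
    rw [← Finset.sum_add_distrib]
    refine Finset.sum_congr rfl fun p hp => ?_
    rw [sFun_eq_sHat_add]
    split_ifs <;> ring
  have h2 : ∑ p ∈ m.divisorsAntidiagonal, (if p.1 = 1 then (-1 : ℝ) ^ (p.2 + 1) else 0)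
      = (-1 : ℝ) ^ (m + 1) := by
    rw [Finset.sum_eq_single (1, m)]
    · simp
    · rintro ⟨a, b⟩ hp hne
      rw [Nat.mem_divisorsAntidiagonal] at hp
      simp only
      rw [if_neg]
      rintro rfl
      refine hne ?_
      have hb : b = m := by simpa using hp.1
      rw [hb]
    · intro h
      exact absurd (Nat.mem_divisorsAntidiagonal.mpr ⟨one_mul m, hm⟩) h
  rw [h1, h2, key_sum q m hm]

lemma abs_sFun_le {q : ℝ} (hq : 1 < q) (n : ℕ) : |sFun q n| ≤ n * (2 * q ^ n) := by
  have hq0 : (0 : ℝ) < q := by linarith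
  rcases eq_or_ne n 1 with rfl | h1
  · rw [sFun, if_pos rfl, abs_of_pos (by linarith)]
    push_cast
    nlinarith
  · rw [sFun, if_neg h1]
    refine (Finset.abs_sum_le_sum_abs _ _).trans ?_
    have hterm : ∀ d ∈ n.divisors, |(ArithmeticFunction.moebius (n / d) : ℝ) * q ^ d|
        ≤ 2 * q ^ n := by
      intro d hd
      rw [abs_mul, abs_pow, abs_of_pos hq0]
      have hmu : |(ArithmeticFunction.moebius (n / d) : ℝ)| ≤ 1 := by
        rw [← Int.cast_abs]
        exact_mod_cast ArithmeticFunction.abs_moebius_le_one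
      have hpow : q ^ d ≤ q ^ n := pow_le_pow_right₀ hq.le (Nat.divisor_le hd)
      nlinarith [pow_pos hq0 d, pow_pos hq0 n, abs_nonneg ((ArithmeticFunction.moebius (n / d) : ℝ))]
    refine (Finset.sum_le_card_nsmul _ _ _ hterm).trans ?_
    rw [nsmul_eq_mul]
    have hcard : (n.divisors).card ≤ n := by
      have hsub : n.divisors ⊆ Finset.Icc 1 n := by
        intro d hd
        exact Finset.mem_Icc.mpr ⟨Nat.pos_of_mem_divisors hd, Nat.divisor_le hd⟩
      calc (n.divisors).card ≤ (Finset.Icc 1 n).card := Finset.card_le_card hsub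
        _ = n := by rw [Nat.card_Icc]; omega
    have h2 : (0:ℝ) ≤ 2 * q ^ n := by positivity
    exact mul_le_mul_of_nonneg_right (by exact_mod_cast hcard) h2

set_option maxHeartbeats 1000000 in
/-- For `q > 1` and `0 < δ < 1`, the family `n ↦ (1 + δ^n q^{-n})^{s_n(q)/n}` (for `n ≥ 1`;
the `n = 0` factor has exponent `0/0 = 0` and hence equals `1`) is multipliable, and
`(1 + δ/q)⁻¹ ∏_{n ≥ 1} (1 + δ^n q^{-n})^{s_n(q)/n} = (1 − δ²/q)/(1 − δ)`.
Here `x ^ a` is the real power `Real.rpow`. -/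
theorem multipliable_and_tprod_special_value (q δ : ℝ) (hq : 1 < q)
    (hδ0 : 0 < δ) (hδ1 : δ < 1) :
    Multipliable (fun n : ℕ => (1 + δ ^ n / q ^ n) ^ (sFun q n / (n : ℝ))) ∧
    (1 + δ / q)⁻¹ * ∏' n : ℕ, (1 + δ ^ n / q ^ n) ^ (sFun q n / (n : ℝ))
      = (1 - δ ^ 2 / q) / (1 - δ) := by
  have hq0 : (0 : ℝ) < q := by linarith
  set u : ℝ := δ / q with hu
  have hu0 : 0 < u := div_pos hδ0 hq0
  have hu1 : u < 1 := by
    rw [hu, div_lt_one hq0]; linarith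
  have hqu : q * u = δ := by rw [hu]; field_simp
  set v : ℝ := δ ^ 2 / q with hv
  have hv0 : 0 < v := by positivity
  have hv1 : v < 1 := by
    rw [hv, div_lt_one hq0]; nlinarith
  have hquu : q * u ^ 2 = v := by rw [hv, hu, div_pow]; field_simp
  set c : ℕ → ℝ := fun n => sFun q n / (n : ℝ) with hc
  set g : ℕ → ℝ := fun n => c n * Real.log (1 + u ^ n) with hg
  set H : ℕ × ℕ → ℝ := fun p => c p.1 * (-((-(u ^ p.1)) ^ p.2) / (p.2 : ℝ)) with hH
  have hsFun0 : sFun q 0 = 0 := by simp [sFun]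
  have hc0 : c 0 = 0 := by simp [hc, hsFun0]
  -- absolute value bound for c
  have hcb : ∀ n : ℕ, |c n| ≤ 2 * q ^ n := by
    intro n
    rcases eq_or_ne n 0 with rfl | hn
    · rw [hc0, abs_zero]; positivity
    · have hn0 : (0 : ℝ) < n := by exact_mod_cast Nat.pos_of_ne_zero hn
      rw [hc, abs_div, abs_of_pos hn0, div_le_iff₀ hn0]
      calc |sFun q n| ≤ n * (2 * q ^ n) := abs_sFun_le hq n
        _ = 2 * q ^ n * n := by ring
  -- rows
  have rows : ∀ a : ℕ, HasSum (fun b => H (a, b)) (g a) := by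
    intro a
    rcases eq_or_ne a 0 with rfl | ha
    · have hz : ∀ b : ℕ, H (0, b) = (0 : ℝ) := by
        intro b; simp [hH, hc0]
      have hgz : g 0 = 0 := by simp [hg, hc0]
      rw [hgz]
      exact hasSum_zero.congr_fun hz
    · have hua : |(-(u ^ a))| < 1 := by
        rw [abs_neg, abs_of_pos (pow_pos hu0 a)]
        exact pow_lt_one₀ hu0.le hu1 ha
      have base := hasSum_pow_div_log_of_abs_lt_one hua
      have base2 := base.mul_left (-(c a))
      have e1 : ∀ k : ℕ, H (a, k + 1)
          = -(c a) * ((-(u ^ a)) ^ (k + 1) / ((k : ℝ) + 1)) := by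
        intro k; simp only [hH]; push_cast; ring
      have e2 : -(c a) * -Real.log (1 - -(u ^ a)) = c a * Real.log (1 + u ^ a) := by
        rw [sub_neg_eq_add]; ring
      have hs1 : HasSum (fun k : ℕ => H (a, k + 1)) (c a * Real.log (1 + u ^ a)) := by
        rw [← e2]; exact base2.congr_fun e1
      have hs2 := (hasSum_nat_add_iff (f := fun b => H (a, b)) 1).mp hs1
      have e3 : ∑ i ∈ Finset.range 1, H (a, i) = 0 := by
        simp [hH]
      rw [e3, add_zero] at hs2
      exact hs2
  -- summability
  have hgeomu : Summable (fun b : ℕ => u ^ b) := summable_geometric_of_lt_one hu0.le hu1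
  have hgeomd : Summable (fun a : ℕ => δ ^ a) := summable_geometric_of_lt_one hδ0.le hδ1
  have hM : Summable (fun p : ℕ × ℕ => (2 * δ ^ p.1) * (u ^ p.2 / u)) := by
    refine Summable.mul_of_nonneg (hgeomd.mul_left 2) (hgeomu.div_const u) ?_ ?_
    · intro a; positivity
    · intro b; positivity
  have hbound : ∀ p : ℕ × ℕ, ‖H p‖ ≤ (2 * δ ^ p.1) * (u ^ p.2 / u) := by
    rintro ⟨a, b⟩
    have hMpos : (0:ℝ) ≤ (2 * δ ^ a) * (u ^ b / u) := by positivity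
    rcases eq_or_ne a 0 with rfl | ha
    · simp only [hH, hc0, zero_mul, norm_zero]; exact hMpos
    rcases eq_or_ne b 0 with rfl | hb
    · have hz : H (a, 0) = 0 := by simp [hH]
      rw [hz, norm_zero]
      exact hMpos
    have h1 : ‖H (a, b)‖ = |c a| * (u ^ (a * b) / (b : ℝ)) := by
      have hb0 : (0:ℝ) < b := by exact_mod_cast Nat.pos_of_ne_zero hb
      simp only [hH, Real.norm_eq_abs, abs_mul, abs_div, abs_neg, abs_pow, abs_neg,
        abs_of_pos (pow_pos hu0 a), abs_of_pos hb0, ← pow_mul]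
    rw [h1]
    have h2 : u ^ (a * b) / (b : ℝ) ≤ u ^ (a * b) := by
      apply div_le_self (by positivity)
      exact_mod_cast Nat.one_le_iff_ne_zero.mpr hb
    have h3 : u ^ (a * b) ≤ u ^ a * (u ^ b / u) := by
      have he : u ^ a * (u ^ b / u) = u ^ (a + b - 1) := by
        have h5 : a + b - 1 + 1 = a + b := by omega
        have h6 : u ^ (a + b) = u ^ (a + b - 1) * u := by rw [← pow_succ, h5]
        have h7 : u ^ a * (u ^ b / u) = u ^ (a + b) / u := by rw [pow_add]; ring
        rw [h7, h6, mul_div_cancel_right₀ _ (ne_of_gt hu0)]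
      rw [he]
      apply pow_le_pow_of_le_one hu0.le hu1.le
      obtain ⟨a', rfl⟩ := Nat.exists_eq_succ_of_ne_zero ha
      obtain ⟨b', rfl⟩ := Nat.exists_eq_succ_of_ne_zero hb
      rw [Nat.succ_mul, Nat.mul_succ]
      omega
    calc |c a| * (u ^ (a * b) / (b : ℝ)) ≤ (2 * q ^ a) * u ^ (a * b) := by
          apply mul_le_mul (hcb a) h2 (by positivity) (by positivity)
      _ ≤ (2 * q ^ a) * (u ^ a * (u ^ b / u)) := by
          apply mul_le_mul_of_nonneg_left h3 (by positivity)
      _ = (2 * δ ^ a) * (u ^ b / u) := by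
          rw [← hqu, mul_pow]; ring
  have hHsum : Summable H := Summable.of_norm_bounded hM hbound
  set T : ℝ := ∑' p, H p with hT
  have hHhas : HasSum H T := hHsum.hasSum
  -- sum of g
  have hgT : HasSum g T := hHhas.prod_fiberwise rows
  -- fiberwise along multiplication
  set G : ℕ → ℝ := fun m =>
    (q ^ m - (if 2 ∣ m then 2 * q ^ (m / 2) else 0) + (-1 : ℝ) ^ (m + 1)) * (u ^ m / (m : ℝ))
    with hGdef
  have hfib : HasSum (fun m : ℕ => ∑' p : (fun p : ℕ × ℕ => p.1 * p.2) ⁻¹' {m}, H p) T :=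
    hHhas.tsum_fiberwise _
  have hGT : HasSum G T := by
    refine hfib.congr_fun fun m => ?_
    rcases eq_or_ne m 0 with rfl | hm
    · have hz : ∀ p : (fun p : ℕ × ℕ => p.1 * p.2) ⁻¹' {(0 : ℕ)}, H p = 0 := by
        rintro ⟨⟨a, b⟩, hp⟩
        simp only [Set.mem_preimage, Set.mem_singleton_iff, Nat.mul_eq_zero] at hp
        rcases hp with rfl | rfl
        · simp [hH, hc0]
        · simp [hH]
      rw [tsum_congr hz, tsum_zero]
      simp [hGdef]
    · have hstep : ∑ p ∈ m.divisorsAntidiagonal, H p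
          = (q ^ m - (if 2 ∣ m then 2 * q ^ (m / 2) else 0) + (-1 : ℝ) ^ (m + 1))
            * (u ^ m / (m : ℝ)) := by
        rw [← key_full q m hm, Finset.sum_mul]
        refine Finset.sum_congr rfl ?_
        rintro ⟨a, b⟩ hp
        rw [Nat.mem_divisorsAntidiagonal] at hp
        obtain ⟨hab, -⟩ := hp
        have ha : a ≠ 0 := by rintro rfl; rw [zero_mul] at hab; exact hm hab.symm
        have hb : b ≠ 0 := by rintro rfl; rw [mul_zero] at hab; exact hm hab.symm
        have hA : ((a : ℝ)) ≠ 0 := by exact_mod_cast ha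
        have hB : ((b : ℝ)) ≠ 0 := by exact_mod_cast hb
        have hm' : ((m : ℝ)) = (a : ℝ) * (b : ℝ) := by exact_mod_cast hab.symm
        simp only [hH, hc]
        rw [show (-(u ^ a)) ^ b = (-1 : ℝ) ^ b * u ^ (a * b) by rw [neg_pow, pow_mul],
          hab, hm']
        field_simp
        ring
      rw [show (fun p : ℕ × ℕ => p.1 * p.2) ⁻¹' {m} = ↑m.divisorsAntidiagonal by
        ext p; simp [Nat.mem_divisorsAntidiagonal, hm],
        Finset.tsum_subtype' m.divisorsAntidiagonal H, hstep]
  have hTval : T = Real.log (1 - v) - Real.log (1 - δ) + Real.log (1 + u) := by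
    have hG1 : HasSum (fun m : ℕ => δ ^ m / (m : ℝ)) (-Real.log (1 - δ)) := by
      have base := hasSum_pow_div_log_of_abs_lt_one
        (x := δ) (by rw [abs_of_pos hδ0]; exact hδ1)
      have hs1 : HasSum (fun n : ℕ => δ ^ (n + 1) / ((n + 1 : ℕ) : ℝ)) (-Real.log (1 - δ)) := by
        refine base.congr_fun fun n => ?_
        push_cast; ring
      have hs2 := (hasSum_nat_add_iff (f := fun m : ℕ => δ ^ m / (m : ℝ)) 1).mp hs1
      simpa using hs2
    have hG2 : HasSum (fun m : ℕ =>
        (if 2 ∣ m then 2 * q ^ (m / 2) else 0) * (u ^ m / (m : ℝ))) (-Real.log (1 - v)) := by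
      have base := hasSum_pow_div_log_of_abs_lt_one
        (x := v) (by rw [abs_of_pos hv0]; exact hv1)
      set G2 : ℕ → ℝ := fun m => (if 2 ∣ m then 2 * q ^ (m / 2) else 0) * (u ^ m / (m : ℝ))
        with hG2def
      have hinj : Function.Injective (fun j : ℕ => 2 * (j + 1)) := by
        intro x y h
        have h' : 2 * (x + 1) = 2 * (y + 1) := h
        omega
      have hvanish : ∀ m ∉ Set.range (fun j : ℕ => 2 * (j + 1)), G2 m = 0 := by
        intro m hm
        by_cases h2 : 2 ∣ m
        · obtain ⟨k, rfl⟩ := h2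
          rcases Nat.eq_zero_or_pos k with rfl | hk
          · simp [hG2def]
          · exact absurd ⟨k - 1, by show 2 * (k - 1 + 1) = 2 * k; omega⟩ hm
        · simp [hG2def, h2]
      have hcomp : HasSum (G2 ∘ fun j : ℕ => 2 * (j + 1)) (-Real.log (1 - v)) := by
        refine base.congr_fun fun j => ?_
        simp only [Function.comp_apply, hG2def]
        rw [if_pos ⟨j + 1, rfl⟩, Nat.mul_div_cancel_left _ (by norm_num : 0 < 2)]
        rw [← hquu, mul_pow, pow_mul]
        have : ((2 * (j + 1) : ℕ) : ℝ) = 2 * ((j : ℝ) + 1) := by push_cast; ring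
        rw [this]
        have hj : ((j : ℝ) + 1) ≠ 0 := by positivity
        field_simp
      exact (hinj.hasSum_iff hvanish).mp hcomp
    have hG3 : HasSum (fun m : ℕ => (-1 : ℝ) ^ (m + 1) * u ^ m / (m : ℝ))
        (Real.log (1 + u)) := by
      have base := hasSum_pow_div_log_of_abs_lt_one
        (x := -u) (by rw [abs_neg, abs_of_pos hu0]; exact hu1)
      have base2 := base.neg
      rw [sub_neg_eq_add, neg_neg] at base2
      have hs1 : HasSum (fun n : ℕ =>
          (-1 : ℝ) ^ ((n + 1) + 1) * u ^ (n + 1) / ((n + 1 : ℕ) : ℝ)) (Real.log (1 + u)) := by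
        refine base2.congr_fun fun n => ?_
        rw [show (-u) ^ (n + 1) = (-1 : ℝ) ^ (n + 1) * u ^ (n + 1) from neg_pow u (n+1)]
        push_cast
        rw [pow_succ ((-1:ℝ)) (n+1)]
        ring
      have hs2 := (hasSum_nat_add_iff
        (f := fun m : ℕ => (-1 : ℝ) ^ (m + 1) * u ^ m / (m : ℝ)) 1).mp hs1
      simpa using hs2
    have hGL : HasSum G (-Real.log (1 - δ) - -Real.log (1 - v) + Real.log (1 + u)) := by
      refine ((hG1.sub hG2).add hG3).congr_fun fun m => ?_
      simp only [hGdef]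
      rw [show δ ^ m = q ^ m * u ^ m by rw [← hqu, mul_pow]]
      ring
    have := hGT.unique hGL
    rw [this]; ring
  -- final assembly
  have h1u : (0:ℝ) < 1 + u := by linarith
  have h1δ : (0:ℝ) < 1 - δ := by linarith
  have h1v : (0:ℝ) < 1 - v := by linarith
  have hfactor : ∀ n : ℕ, (1 + δ ^ n / q ^ n) ^ (sFun q n / (n : ℝ)) = Real.exp (g n) := by
    intro n
    rw [show δ ^ n / q ^ n = u ^ n from (div_pow δ q n).symm,
      Real.rpow_def_of_pos (by positivity : (0:ℝ) < 1 + u ^ n)]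
    rw [hg]
    ring_nf
    simp only [hc]
    ring_nf
  have hprod : HasProd (fun n : ℕ => (1 + δ ^ n / q ^ n) ^ (sFun q n / (n : ℝ)))
      (Real.exp T) := by
    refine (hgT.rexp).congr_fun fun n => ?_
    rw [hfactor n]
    rfl
  refine ⟨hprod.multipliable, ?_⟩
  rw [hprod.tprod_eq, hTval, Real.exp_add, Real.exp_sub, Real.exp_log h1v,
    Real.exp_log h1δ, Real.exp_log h1u]
  rw [show (1 : ℝ) + δ / q = 1 + u from rfl]
  rw [hv]
  field_simp
end

section
/- Let q > 1 be a real number, 0 < δ < 1, and let p = (p_1, p_2, …) be a real sequence with |p_n| < δ^n/q^n for all n ≥ 1. Then the family n ↦ (1 + p_n)^{M_n(q)} is multipliable with product H_q(p) > 0, the family n ↦ (1 + p_n)^{s_n(q)/n} is multipliable, and ∏_{n≥1} (1 + p_n)^{s_n(q)/n} = (1 + p_1) · H_q(p). -/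
/-- `M_n(q) = (1/n) ∑_{d ∣ n} μ(n/d) q^d`; so `M_1(q) = q` and `M_n(q) = s_n(q)/n` for `n ≥ 2`.
(For `n = 0` this is `0` by the conventions `1/0 = 0` and the empty sum.) -/
noncomputable def MFun (q : ℝ) (n : ℕ) : ℝ :=
  (1 / (n : ℝ)) * ∑ d ∈ n.divisors, (ArithmeticFunction.moebius (n / d) : ℝ) * q ^ d

/-- `H_q(p) = ∏_{n ≥ 1} (1 + p_n)^{M_n(q)}`, a product of real powers (`Real.rpow`).
The `n = 0` factor is `(1 + p 0) ^ (0 : ℝ) = 1`, so the product effectively runs over `n ≥ 1`. -/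
noncomputable def Hfun (q : ℝ) (p : ℕ → ℝ) : ℝ :=
  ∏' n : ℕ, (1 + p n) ^ (MFun q n)

/-- For `q > 1`, `0 < δ < 1` and a real sequence `p` with `|p_n| < δ^n/q^n` for all `n ≥ 1`:
the family `n ↦ (1 + p_n)^{M_n(q)}` is multipliable with product `H_q(p) > 0`, the family
`n ↦ (1 + p_n)^{s_n(q)/n}` is multipliable, and
`∏_{n ≥ 1} (1 + p_n)^{s_n(q)/n} = (1 + p_1) · H_q(p)`. -/
theorem multipliable_and_tprod_eq_of_small (q δ : ℝ) (hq : 1 < q)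
    (hδ0 : 0 < δ) (hδ1 : δ < 1)
    (p : ℕ → ℝ) (hp : ∀ n : ℕ, 1 ≤ n → |p n| < δ ^ n / q ^ n) :
    Multipliable (fun n : ℕ => (1 + p n) ^ (MFun q n)) ∧
    0 < Hfun q p ∧
    Multipliable (fun n : ℕ => (1 + p n) ^ (sFun q n / (n : ℝ))) ∧
    ∏' n : ℕ, (1 + p n) ^ (sFun q n / (n : ℝ)) = (1 + p 1) * Hfun q p := by
  have hq0 : (0:ℝ) < q := lt_trans one_pos hq
  set r : ℝ := δ / q with hrdef
  have hr0 : 0 < r := div_pos hδ0 hq0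
  have hr1 : r < 1 := by rw [hrdef, div_lt_one hq0]; exact hδ1.trans hq
  have hrn : ∀ n : ℕ, 1 ≤ n → δ ^ n / q ^ n ≤ r := by
    intro n hn
    rw [hrdef, ← div_pow]
    exact pow_le_of_le_one (le_of_lt hr0) (le_of_lt hr1) (Nat.one_le_iff_ne_zero.mp hn)
  have hplt : ∀ n : ℕ, 1 ≤ n → |p n| < 1 := fun n hn =>
    lt_of_lt_of_le (hp n hn) ((hrn n hn).trans hr1.le)
  have hpos : ∀ n : ℕ, 1 ≤ n → 0 < 1 + p n := by
    intro n hn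
    have := abs_lt.mp (hplt n hn)
    linarith [this.1]
  set c : ℕ → ℝ := fun n => MFun q n * Real.log (1 + p n) with hcdef
  have hM0 : MFun q 0 = 0 := by simp [MFun]
  have hf : ∀ n : ℕ, (1 + p n) ^ (MFun q n) = Real.exp (c n) := by
    intro n
    rcases Nat.eq_zero_or_pos n with rfl | hn
    · simp [hcdef, hM0]
    · rw [Real.rpow_def_of_pos (hpos n hn), hcdef, mul_comm]
  -- bound on MFun
  have hMb : ∀ n : ℕ, 1 ≤ n → |MFun q n| ≤ q ^ n := by
    intro n hn
    have hsumb : |∑ d ∈ n.divisors, (ArithmeticFunction.moebius (n / d) : ℝ) * q ^ d|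
        ≤ (n : ℝ) * q ^ n := by
      calc |∑ d ∈ n.divisors, (ArithmeticFunction.moebius (n / d) : ℝ) * q ^ d|
          ≤ ∑ d ∈ n.divisors, |(ArithmeticFunction.moebius (n / d) : ℝ) * q ^ d| :=
            Finset.abs_sum_le_sum_abs _ _
        _ ≤ ∑ d ∈ n.divisors, q ^ n := by
            refine Finset.sum_le_sum fun d hd => ?_
            rw [abs_mul]
            have h1 : |(ArithmeticFunction.moebius (n / d) : ℝ)| ≤ 1 := by
              have := ArithmeticFunction.abs_moebius_le_one (n := n / d)
              exact_mod_cast (by exact_mod_cast this : |(ArithmeticFunction.moebius (n/d) : ℤ)| ≤ (1:ℤ))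
            have h2 : |q ^ d| ≤ q ^ n := by
              rw [abs_of_nonneg (pow_nonneg hq0.le _)]
              exact pow_le_pow_right₀ hq.le (Nat.le_of_dvd hn (Nat.dvd_of_mem_divisors hd))
            calc |(ArithmeticFunction.moebius (n / d) : ℝ)| * |q ^ d|
                ≤ 1 * (q ^ n) := mul_le_mul h1 h2 (abs_nonneg _) one_pos.le
              _ = q ^ n := one_mul _
        _ = (n.divisors.card : ℝ) * q ^ n := by rw [Finset.sum_const, nsmul_eq_mul]
        _ ≤ (n : ℝ) * q ^ n := by
            have hcard : n.divisors.card ≤ n := by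
              have := Finset.card_filter_le (Finset.Ico 1 (n + 1)) (· ∣ n)
              simpa [Nat.divisors] using this
            exact mul_le_mul_of_nonneg_right (by exact_mod_cast hcard) (pow_nonneg hq0.le _)
    rw [MFun, abs_mul, abs_of_nonneg (by positivity : (0:ℝ) ≤ 1 / (n:ℝ))]
    have hn' : (0:ℝ) < (n:ℝ) := by exact_mod_cast hn
    calc 1 / (n:ℝ) * |∑ d ∈ n.divisors, (ArithmeticFunction.moebius (n / d) : ℝ) * q ^ d|
        ≤ 1 / (n:ℝ) * ((n:ℝ) * q ^ n) := by
          exact mul_le_mul_of_nonneg_left hsumb (by positivity)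
      _ = q ^ n := by field_simp
  -- bound on log
  have hlogb : ∀ n : ℕ, 1 ≤ n → |Real.log (1 + p n)| ≤ (δ ^ n / q ^ n) / (1 - r) := by
    intro n hn
    have h1 : |Real.log (1 + p n)| ≤ |p n| / (1 - |p n|) := by
      have := Real.abs_log_sub_add_sum_range_le (x := -p n) (by rw [abs_neg]; exact hplt n hn) 0
      simpa [abs_neg] using this
    refine h1.trans ?_
    have hd : 0 < 1 - r := by linarith
    have hd2 : 1 - r ≤ 1 - |p n| := by
      have := (hp n hn).le.trans (hrn n hn)
      linarith
    exact div_le_div₀ (by positivity) (hp n hn).le hd hd2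
  -- summability of c
  have hsum : Summable c := by
    apply Summable.of_norm_bounded (g := fun n => (1 / (1 - r)) * δ ^ n)
      ((summable_geometric_of_lt_one hδ0.le hδ1).mul_left _)
    intro n
    rcases Nat.eq_zero_or_pos n with rfl | hn
    · simp only [hcdef, hM0, zero_mul, norm_zero, pow_zero, mul_one]
      have hd : (0:ℝ) < 1 - r := by linarith
      positivity
    · rw [hcdef]
      simp only [Real.norm_eq_abs, abs_mul]
      calc |MFun q n| * |Real.log (1 + p n)|
          ≤ q ^ n * ((δ ^ n / q ^ n) / (1 - r)) :=
            mul_le_mul (hMb n hn) (hlogb n hn) (abs_nonneg _) (pow_nonneg hq0.le _)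
        _ = 1 / (1 - r) * δ ^ n := by
            have hqn : (q:ℝ) ^ n ≠ 0 := by positivity
            field_simp
  obtain ⟨S, hS⟩ := hsum
  have hprod : HasProd (fun n : ℕ => (1 + p n) ^ (MFun q n)) (Real.exp S) := by
    have h := hS.rexp
    simp only [Function.comp_def] at h
    exact h.congr_fun fun n => hf n
  have hmult1 : Multipliable (fun n : ℕ => (1 + p n) ^ (MFun q n)) := ⟨_, hprod⟩
  have hH : Hfun q p = Real.exp S := hprod.tprod_eq
  have hHpos : 0 < Hfun q p := by rw [hH]; exact Real.exp_pos _
  -- second family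
  set c' : ℕ → ℝ := fun n => c n + (if n = 1 then Real.log (1 + p 1) else 0) with hc'def
  have hM1 : MFun q 1 = q := by simp [MFun]
  have hce : ∀ n : ℕ, sFun q n / (n : ℝ) * Real.log (1 + p n) = c' n := by
    intro n
    rcases Nat.eq_zero_or_pos n with rfl | hn
    · simp [hc'def, hcdef, sFun, hM0]
    rcases eq_or_ne n 1 with rfl | hn1
    · simp [hc'def, hcdef, sFun, hM1]
      ring
    · simp only [hc'def, hcdef, if_neg hn1, sFun, if_neg hn1, MFun, add_zero]
      ring
  have hf' : ∀ n : ℕ, (1 + p n) ^ (sFun q n / (n : ℝ)) = Real.exp (c' n) := by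
    intro n
    rcases Nat.eq_zero_or_pos n with rfl | hn
    · simp [hc'def, hcdef, sFun, hM0]
    · rw [Real.rpow_def_of_pos (hpos n hn), mul_comm, hce n]
  have hS' : HasSum c' (S + Real.log (1 + p 1)) := hS.add (hasSum_ite_eq 1 _)
  have hprod' : HasProd (fun n : ℕ => (1 + p n) ^ (sFun q n / (n : ℝ)))
      (Real.exp (S + Real.log (1 + p 1))) := by
    have h := hS'.rexp
    simp only [Function.comp_def] at h
    exact h.congr_fun fun n => hf' n
  refine ⟨hmult1, hHpos, ⟨_, hprod'⟩, ?_⟩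
  rw [hprod'.tprod_eq, Real.exp_add, Real.exp_log (hpos 1 le_rfl), hH, mul_comm]
end

section
/- Let q > 1 be a real number, 0 < δ < 1, and let p = (p_1, p_2, …) be a real sequence with |p_n| < δ^n/q^n for all n ≥ 1. Define G_q(p) = ∏_{n≥1} (1 + p_n)^{s_n(q)/n} and ch_0^{(q)}(p) = (G_q(p) − 1)/(q(q² − 1)) − p_1²/(2(q − 1)) − p_1/(q(q − 1)) − p_2/(2(q + 1)). Then ∂_1 ch_0^{(q)}(p) exists, and p_1 − ∂_1 ch_0^{(q)}(p) = q p_1/(q − 1) − ( G_q(p)/(1 + p_1) − 1 )/(q(q − 1)); that is, p_1 − ∂_1 ch_0^{(q)}(p) = c_1^{(q)}(p). -/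
/-- `c_1^{(q)}(p) = q·p_1/(q − 1) − (H_q(p) − 1)/(q(q − 1))`. -/
noncomputable def c1Fun (q : ℝ) (p : ℕ → ℝ) : ℝ :=
  q * p 1 / (q - 1) - (Hfun q p - 1) / (q * (q - 1))

/-- `G_q(p) = ∏_{n ≥ 1} (1 + p_n)^{s_n(q)/n}` (the `n = 0` factor is `1`). -/
noncomputable def Gfun (q : ℝ) (p : ℕ → ℝ) : ℝ :=
  ∏' n : ℕ, (1 + p n) ^ (sFun q n / (n : ℝ))

/-- `ch_0^{(q)}(p) = (G_q(p) − 1)/(q(q² − 1)) − p_1²/(2(q − 1)) − p_1/(q(q − 1)) − p_2/(2(q + 1))`. -/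
noncomputable def ch0Fun (q : ℝ) (p : ℕ → ℝ) : ℝ :=
  (Gfun q p - 1) / (q * (q ^ 2 - 1)) - (p 1) ^ 2 / (2 * (q - 1))
    - p 1 / (q * (q - 1)) - p 2 / (2 * (q + 1))

lemma sFun_zero (q : ℝ) : sFun q 0 = 0 := by simp [sFun]

lemma sFun_one (q : ℝ) : sFun q 1 = q + 1 := by simp [sFun]

lemma MFun_zero (q : ℝ) : MFun q 0 = 0 := by simp [MFun]

lemma MFun_one (q : ℝ) : MFun q 1 = q := by simp [MFun]

lemma MFun_eq (q : ℝ) {n : ℕ} (hn : n ≠ 1) : MFun q n = sFun q n / n := by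
  rw [MFun, sFun, if_neg hn, one_div, inv_mul_eq_div]

lemma abs_divisor_sum_le {q : ℝ} (hq : 1 < q) (n : ℕ) :
    |∑ d ∈ n.divisors, (ArithmeticFunction.moebius (n / d) : ℝ) * q ^ d| ≤ n * q ^ n := by
  have h0 : (0:ℝ) ≤ q := by linarith
  calc |∑ d ∈ n.divisors, (ArithmeticFunction.moebius (n / d) : ℝ) * q ^ d|
      ≤ ∑ d ∈ n.divisors, |(ArithmeticFunction.moebius (n / d) : ℝ) * q ^ d| :=
        Finset.abs_sum_le_sum_abs _ _
    _ ≤ ∑ d ∈ n.divisors, q ^ n := by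
        refine Finset.sum_le_sum fun d hd => ?_
        rw [abs_mul]
        have h1 : |(ArithmeticFunction.moebius (n / d) : ℝ)| ≤ 1 := by
          rw [← Int.cast_abs]
          exact_mod_cast ArithmeticFunction.abs_moebius_le_one
        have h2 : |q ^ d| ≤ q ^ n := by
          rw [abs_pow, abs_of_nonneg h0]
          exact pow_le_pow_right₀ hq.le (Nat.divisor_le hd)
        calc |(ArithmeticFunction.moebius (n / d) : ℝ)| * |q ^ d|
            ≤ 1 * (q ^ n) := mul_le_mul h1 h2 (abs_nonneg _) zero_le_one
          _ = q ^ n := one_mul _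
    _ = (n.divisors.card : ℝ) * q ^ n := by rw [Finset.sum_const, nsmul_eq_mul]
    _ ≤ n * q ^ n := by
        have hcard : n.divisors.card ≤ n := by
          have hsub : n.divisors ⊆ Finset.Icc 1 n := by
            intro d hd
            rw [Finset.mem_Icc]
            exact ⟨Nat.pos_of_mem_divisors hd, Nat.divisor_le hd⟩
          calc n.divisors.card ≤ (Finset.Icc 1 n).card := Finset.card_le_card hsub
            _ = n := by rw [Nat.card_Icc]; omega
        have : (0:ℝ) < q ^ n := by positivity
        exact mul_le_mul_of_nonneg_right (by exact_mod_cast hcard) this.le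

lemma abs_sFun_div_le {q : ℝ} (hq : 1 < q) (n : ℕ) : |sFun q n / n| ≤ 2 * q ^ n := by
  rcases eq_or_ne n 1 with rfl | hn
  · rw [sFun_one]
    simp only [Nat.cast_one, div_one, pow_one]
    rw [abs_of_pos (by linarith)]; linarith
  rcases Nat.eq_zero_or_pos n with rfl | hpos
  · rw [sFun_zero]; simp
  · rw [sFun, if_neg hn, abs_div, Nat.abs_cast]
    rw [div_le_iff₀ (by exact_mod_cast hpos)]
    calc |∑ d ∈ n.divisors, (ArithmeticFunction.moebius (n / d) : ℝ) * q ^ d| ≤ n * q ^ n :=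
          abs_divisor_sum_le hq n
      _ ≤ 2 * q ^ n * n := by
          have : (1:ℝ) ≤ n := by exact_mod_cast hpos
          nlinarith [pow_pos (show (0:ℝ) < q by linarith) n]

lemma abs_MFun_le {q : ℝ} (hq : 1 < q) (n : ℕ) : |MFun q n| ≤ 2 * q ^ n := by
  rcases eq_or_ne n 1 with rfl | hn
  · rw [MFun_one]; rw [abs_of_pos (by linarith)]; simp; linarith
  · rw [MFun_eq q hn]
    exact abs_sFun_div_le hq n

lemma abs_log_one_add_le {x r : ℝ} (hr0 : 0 ≤ r) (hr : r < 1) (hx : |x| ≤ r) :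
    |Real.log (1 + x)| ≤ |x| / (1 - r) := by
  obtain ⟨hx1, hx2⟩ := abs_le.mp hx
  have h1 : 0 < 1 + x := by linarith
  have hr1 : 0 < 1 - r := by linarith
  rw [abs_le]
  constructor
  · have h := Real.log_le_sub_one_of_pos (x := (1 + x)⁻¹) (by positivity)
    rw [Real.log_inv] at h
    have h2 : x / (1 + x) ≤ Real.log (1 + x) := by
      have he : (1 + x)⁻¹ - 1 = -x / (1 + x) := by field_simp; ring
      rw [he, neg_div] at h; linarith
    have h3 : -(|x| / (1 - r)) ≤ x / (1 + x) := by
      rw [← neg_div, div_le_div_iff₀ hr1 h1]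
      rcases abs_cases x with ⟨h4, h5⟩ | ⟨h4, h5⟩ <;> rw [h4] <;> nlinarith
    linarith
  · have h := Real.log_le_sub_one_of_pos h1
    have h2 : x ≤ |x| := le_abs_self x
    have h3 : |x| ≤ |x| / (1 - r) := by
      rw [le_div_iff₀ hr1]; nlinarith [abs_nonneg x]
    linarith

lemma summable_mul_log {q δ : ℝ} (hq : 1 < q) (hδ0 : 0 < δ) (hδ1 : δ < 1)
    {p : ℕ → ℝ} (hp : ∀ n : ℕ, 1 ≤ n → |p n| ≤ δ ^ n / q ^ n)
    {e : ℕ → ℝ} (he : ∀ n, |e n| ≤ 2 * q ^ n) (he0 : e 0 = 0) :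
    Summable fun n => e n * Real.log (1 + p n) := by
  have hq0 : (0:ℝ) < q := by linarith
  set r := δ / q with hrdef
  have hr0 : 0 < r := div_pos hδ0 hq0
  have hr1 : r < 1 := by rw [hrdef, div_lt_one hq0]; linarith
  have h1r : 0 < 1 - r := by linarith
  have hbound : ∀ n : ℕ, |e n * Real.log (1 + p n)| ≤ (2 / (1 - r)) * δ ^ n := by
    intro n
    rcases Nat.eq_zero_or_pos n with rfl | hn
    · rw [he0, zero_mul, abs_zero]; positivity
    · have hpn : |p n| ≤ r ^ n := by
        have : δ ^ n / q ^ n = r ^ n := by rw [hrdef, div_pow]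
        rw [← this]; exact hp n hn
      have hpr : |p n| ≤ r := hpn.trans (pow_le_of_le_one hr0.le hr1.le (by omega))
      have hlog : |Real.log (1 + p n)| ≤ |p n| / (1 - r) :=
        abs_log_one_add_le hr0.le hr1 hpr
      calc |e n * Real.log (1 + p n)| = |e n| * |Real.log (1 + p n)| := abs_mul _ _
        _ ≤ (2 * q ^ n) * (r ^ n / (1 - r)) := by
            refine mul_le_mul (he n) (hlog.trans ?_) (abs_nonneg _) (by positivity)
            gcongr
        _ = 2 * (q ^ n * r ^ n) / (1 - r) := by ring
        _ = (2 / (1 - r)) * δ ^ n := by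
            have hk : q ^ n * r ^ n = δ ^ n := by
              rw [← mul_pow, hrdef, mul_div_cancel₀ _ (ne_of_gt hq0)]
            rw [hk]; ring
  have hg : Summable fun n : ℕ => (2 / (1 - r)) * δ ^ n :=
    (summable_geometric_of_lt_one hδ0.le hδ1).mul_left _
  exact Summable.of_abs (hg.of_nonneg_of_le (fun n => abs_nonneg _) hbound)

lemma hasProd_rpow {p e : ℕ → ℝ} (he0 : e 0 = 0) (hpos : ∀ n : ℕ, 1 ≤ n → 0 < 1 + p n)
    (hsum : Summable fun n => e n * Real.log (1 + p n)) :
    HasProd (fun n => (1 + p n) ^ e n) (Real.exp (∑' n, e n * Real.log (1 + p n))) := by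
  have h := hsum.hasSum.rexp
  have heq : (fun n => (1 + p n) ^ e n) =
      Real.exp ∘ (fun n => e n * Real.log (1 + p n)) := by
    funext n
    rcases Nat.eq_zero_or_pos n with rfl | hn
    · simp [he0]
    · rw [Function.comp_apply, Real.rpow_def_of_pos (hpos n hn), mul_comm]
  rw [heq]
  exact h

/-- For `q > 1`, `0 < δ < 1` and `|p_n| < δ^n/q^n` for all `n ≥ 1`, the partial derivative
`∂_1 ch_0^{(q)}(p)` (the derivative at `t = p_1` of `t ↦ ch_0^{(q)}` of `p` with first entry
replaced by `t`) exists, and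
`p_1 − ∂_1 ch_0^{(q)}(p) = q·p_1/(q − 1) − (G_q(p)/(1 + p_1) − 1)/(q(q − 1)) = c_1^{(q)}(p)`. -/
theorem p1_sub_deriv_ch0_eq_c1 (q δ : ℝ) (hq : 1 < q) (hδ0 : 0 < δ) (hδ1 : δ < 1)
    (p : ℕ → ℝ) (hp : ∀ n : ℕ, 1 ≤ n → |p n| < δ ^ n / q ^ n) :
    ∃ D : ℝ,
      HasDerivAt (fun t : ℝ => ch0Fun q (Function.update p 1 t)) D (p 1) ∧
      p 1 - D = q * p 1 / (q - 1) - (Gfun q p / (1 + p 1) - 1) / (q * (q - 1)) ∧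
      p 1 - D = c1Fun q p := by
  have hq0 : (0:ℝ) < q := by linarith
  have hp' : ∀ n : ℕ, 1 ≤ n → |p n| ≤ δ ^ n / q ^ n := fun n hn => (hp n hn).le
  have hpos : ∀ n : ℕ, 1 ≤ n → 0 < 1 + p n := by
    intro n hn
    have h1 : |p n| < 1 := by
      refine (hp n hn).trans_le ?_
      rw [div_le_one (by positivity)]
      calc δ ^ n ≤ 1 := pow_le_one₀ hδ0.le hδ1.le
        _ ≤ q ^ n := one_le_pow₀ hq.le
    have := abs_lt.mp h1
    linarith [this.1]
  have hu : 0 < 1 + p 1 := hpos 1 le_rfl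
  -- the sequence ℓ and its sum
  set ℓ : ℕ → ℝ := fun n => (sFun q n / n) * Real.log (1 + p n) with hℓdef
  have hℓ0 : ℓ 0 = 0 := by simp [hℓdef, sFun_zero]
  have hℓe : ∀ n, |sFun q n / (n:ℝ)| ≤ 2 * q ^ n := fun n => abs_sFun_div_le hq n
  have he0 : sFun q 0 / ((0:ℕ):ℝ) = 0 := by simp [sFun_zero]
  have hsumℓ : Summable ℓ := summable_mul_log hq hδ0 hδ1 hp' hℓe he0
  have hGp : Gfun q p = Real.exp (∑' n, ℓ n) :=
    (hasProd_rpow he0 hpos hsumℓ).tprod_eq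
  set S : ℝ := ∑' n, (if n = 1 then 0 else ℓ n) with hSdef
  have hℓ1 : ℓ 1 = (q + 1) * Real.log (1 + p 1) := by
    simp [hℓdef, sFun_one]
  have hsplit : ∑' n, ℓ n = (q + 1) * Real.log (1 + p 1) + S := by
    rw [Summable.tsum_eq_add_tsum_ite hsumℓ 1, hℓ1]
  -- Gfun of the updated sequence, for t > -1
  have key : ∀ t : ℝ, -1 < t →
      Gfun q (Function.update p 1 t) = Real.exp ((q + 1) * Real.log (1 + t) + S) := by
    intro t ht
    set p' := Function.update p 1 t with hp'def
    have hℓ' : (fun n => (sFun q n / n) * Real.log (1 + p' n)) =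
        fun n => if n = 1 then (q + 1) * Real.log (1 + t) else ℓ n := by
      funext n
      by_cases h : n = 1
      · subst h; simp [hp'def, sFun_one]
      · simp [hp'def, Function.update_of_ne h, hℓdef, if_neg h]
    have hsum' : Summable fun n => (sFun q n / n) * Real.log (1 + p' n) := by
      rw [hℓ']
      have h2 : (fun n => if n = 1 then (q + 1) * Real.log (1 + t) else ℓ n) =
          fun n => (if n = 1 then (q + 1) * Real.log (1 + t) - ℓ 1 else 0) + ℓ n := by
        funext n; by_cases h : n = 1 <;> simp [h]
      rw [h2]
      exact ((hasSum_ite_eq 1 _).summable).add hsumℓ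
    have hpos' : ∀ n : ℕ, 1 ≤ n → 0 < 1 + p' n := by
      intro n hn
      by_cases h : n = 1
      · subst h; simp [hp'def]; linarith
      · rw [hp'def, Function.update_of_ne h]; exact hpos n hn
    have hG' : Gfun q p' = Real.exp (∑' n, (sFun q n / n) * Real.log (1 + p' n)) :=
      (hasProd_rpow he0 hpos' hsum').tprod_eq
    rw [hG']
    congr 1
    rw [Summable.tsum_eq_add_tsum_ite hsum' 1]
    have h1 : (sFun q 1 / (1:ℕ)) * Real.log (1 + p' 1) = (q + 1) * Real.log (1 + t) := by
      simp [hp'def, sFun_one]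
    rw [h1]
    congr 1
    refine tsum_congr fun n => ?_
    by_cases h : n = 1
    · simp [h]
    · simp only [if_neg h]
      have hx := congrFun hℓ' n
      simp only [if_neg h] at hx
      exact hx
  -- the smooth model function and its derivative
  have hd1 : HasDerivAt (fun t : ℝ => 1 + t) 1 (p 1) := (hasDerivAt_id (p 1)).const_add 1
  have hd2 : HasDerivAt (fun t : ℝ => Real.log (1 + t)) (1 / (1 + p 1)) (p 1) :=
    hd1.log (ne_of_gt hu)
  have hd3 : HasDerivAt (fun t : ℝ => (q + 1) * Real.log (1 + t) + S)
      ((q + 1) * (1 / (1 + p 1))) (p 1) := (hd2.const_mul (q + 1)).add_const S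
  have hd4 := hd3.exp
  have hd5 := (hd4.sub_const 1).div_const (q * (q ^ 2 - 1))
  have hd6 : HasDerivAt (fun t : ℝ => t ^ 2 / (2 * (q - 1)))
      ((2 * p 1 ^ 1) / (2 * (q - 1))) (p 1) := by
    exact (hasDerivAt_pow 2 (p 1)).div_const _ |>.congr_deriv (by norm_num)
  have hd7 : HasDerivAt (fun t : ℝ => t / (q * (q - 1))) (1 / (q * (q - 1))) (p 1) :=
    (hasDerivAt_id (p 1)).div_const _
  set D : ℝ := Real.exp ((q + 1) * Real.log (1 + p 1) + S) * ((q + 1) * (1 / (1 + p 1))) /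
      (q * (q ^ 2 - 1)) - (2 * p 1 ^ 1) / (2 * (q - 1)) - 1 / (q * (q - 1)) with hDdef
  have hdφ : HasDerivAt (fun t : ℝ =>
      (Real.exp ((q + 1) * Real.log (1 + t) + S) - 1) / (q * (q ^ 2 - 1))
        - t ^ 2 / (2 * (q - 1)) - t / (q * (q - 1)) - p 2 / (2 * (q + 1))) D (p 1) :=
    (((hd5.sub hd6).sub hd7).sub_const _)
  -- the two functions agree near p 1
  have hEq : (fun t : ℝ => ch0Fun q (Function.update p 1 t)) =ᶠ[nhds (p 1)]
      (fun t : ℝ =>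
      (Real.exp ((q + 1) * Real.log (1 + t) + S) - 1) / (q * (q ^ 2 - 1))
        - t ^ 2 / (2 * (q - 1)) - t / (q * (q - 1)) - p 2 / (2 * (q + 1))) := by
    filter_upwards [Ioi_mem_nhds (show (-1:ℝ) < p 1 by linarith)] with t ht
    have h2 : Function.update p 1 t 2 = p 2 := Function.update_of_ne (by norm_num) _ _
    rw [ch0Fun, key t ht, Function.update_self, h2]
  have hD : HasDerivAt (fun t : ℝ => ch0Fun q (Function.update p 1 t)) D (p 1) :=
    hdφ.congr_of_eventuallyEq hEq
  -- the value of Gfun q p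
  have hG : Gfun q p = Real.exp ((q + 1) * Real.log (1 + p 1) + S) := by
    rw [hGp, hsplit]
  -- algebra
  have hq1 : q - 1 ≠ 0 := by intro h; nlinarith [h]
  have hq2 : q + 1 ≠ 0 := by positivity
  have hqne : q ≠ 0 := ne_of_gt hq0
  have hune : (1 + p 1) ≠ 0 := ne_of_gt hu
  have hq21 : q ^ 2 - 1 ≠ 0 := by nlinarith
  have main : p 1 - D = q * p 1 / (q - 1) - (Gfun q p / (1 + p 1) - 1) / (q * (q - 1)) := by
    rw [hDdef, hG]
    have hq2eq : q ^ 2 - 1 = (q - 1) * (q + 1) := by ring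
    field_simp
    ring
  refine ⟨D, hD, main, ?_⟩
  -- Hfun q p = Gfun q p / (1 + p 1)
  have hm0 : MFun q 0 = 0 := MFun_zero q
  have hsumm : Summable fun n => MFun q n * Real.log (1 + p n) :=
    summable_mul_log hq hδ0 hδ1 hp' (fun n => abs_MFun_le hq n) hm0
  have hHp : Hfun q p = Real.exp (∑' n, MFun q n * Real.log (1 + p n)) :=
    (hasProd_rpow hm0 hpos hsumm).tprod_eq
  have hmsplit : ∑' n, MFun q n * Real.log (1 + p n) = q * Real.log (1 + p 1) + S := by
    rw [Summable.tsum_eq_add_tsum_ite hsumm 1, MFun_one]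
    congr 1
    refine tsum_congr fun n => ?_
    by_cases h : n = 1
    · simp [h]
    · simp only [if_neg h, hℓdef, MFun_eq q h]
  have hH : Hfun q p = Gfun q p / (1 + p 1) := by
    rw [hHp, hmsplit, hG]
    have : (q + 1) * Real.log (1 + p 1) + S
        = (q * Real.log (1 + p 1) + S) + Real.log (1 + p 1) := by ring
    rw [this, Real.exp_add (q * Real.log (1 + p 1) + S) (Real.log (1 + p 1)), Real.exp_log hu, mul_div_assoc, div_self hune, mul_one]
  rw [main, c1Fun, hH]
end

section
/- Let q ≥ 2 be a real number, 0 < δ < 1, r ≥ 2 an integer, and let p = (p_1, p_2, …) be a real sequence with |p_n| < δ^n/q^n for all n ≥ 1. Then |∂_r c_1^{(q)}(p)| < ( q^{r−1} / ( r (q − 1)(1 − q^{−r}) ) ) · (1 − δ²/q)/(1 − δ). -/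
namespace C1Aux

open Real Filter Function

lemma MFun_zero (q : ℝ) : MFun q 0 = 0 := by simp [MFun]

lemma MFun_one (q : ℝ) : MFun q 1 = q := by simp [MFun]

/-- Möbius inversion: `∑_{d ∣ m} d · M_d(q) = q^m` for `m ≥ 1`. -/
lemma sum_divisors_mul_MFun (q : ℝ) : ∀ m : ℕ, 0 < m →
    ∑ d ∈ m.divisors, (d : ℝ) * MFun q d = q ^ m := by
  refine (ArithmeticFunction.sum_eq_iff_sum_mul_moebius_eq
    (f := fun d : ℕ => (d : ℝ) * MFun q d) (g := fun n => q ^ n)).mpr ?_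
  intro n hn
  rw [Nat.sum_divisorsAntidiagonal'
    (f := fun x y => ((ArithmeticFunction.moebius x : ℤ) : ℝ) * q ^ y)]
  rw [MFun]
  have hn' : (n : ℝ) ≠ 0 := Nat.cast_ne_zero.mpr hn.ne'
  rw [← mul_assoc, mul_one_div, div_self hn', one_mul]

lemma sum_Icc_pow_le {q : ℝ} (hq : 2 ≤ q) (m : ℕ) :
    ∑ d ∈ Finset.Icc 1 m, q ^ d ≤ q ^ (m + 1) := by
  have hq0 : (0:ℝ) < q := by linarith
  induction m with
  | zero => simpa using by positivity
  | succ m ih =>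
    rw [Finset.sum_Icc_succ_top (by omega)]
    have h1 : q ^ (m + 1) + q ^ (m + 1) ≤ q ^ (m + 2) := by
      have : (2:ℝ) * q ^ (m+1) ≤ q * q ^ (m+1) := by
        apply mul_le_mul_of_nonneg_right hq (by positivity)
      calc q ^ (m + 1) + q ^ (m + 1) = 2 * q ^ (m+1) := by ring
        _ ≤ q * q ^ (m+1) := this
        _ = q ^ (m + 2) := by ring
    linarith

lemma MFun_nonneg {q : ℝ} (hq : 2 ≤ q) : ∀ n : ℕ, 0 ≤ MFun q n := by
  have hq0 : (0:ℝ) < q := by linarith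
  intro n
  induction n using Nat.strong_induction_on with
  | _ n ih =>
    match n, ih with
    | 0, _ => rw [MFun_zero]
    | 1, _ => rw [MFun_one]; positivity
    | (m + 2), ih =>
      set n := m + 2 with hn
      have hn0 : 0 < n := by omega
      have hA := sum_divisors_mul_MFun q n hn0
      rw [← Nat.cons_self_properDivisors (by omega : n ≠ 0), Finset.sum_cons] at hA
      -- hA : n * M_n + ∑ proper = q ^ n
      have hterm : ∀ d ∈ n.properDivisors, (d:ℝ) * MFun q d ≤ q ^ d := by
        intro d hd
        rw [Nat.mem_properDivisors] at hd
        have hd0 : 0 < d := Nat.pos_of_dvd_of_pos hd.1 hn0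
        have hB := sum_divisors_mul_MFun q d hd0
        rw [← hB]
        refine Finset.single_le_sum (f := fun e : ℕ => (e:ℝ) * MFun q e) ?_
          (Nat.mem_divisors_self d hd0.ne')
        intro e he
        have he' : e ≤ d := Nat.le_of_dvd hd0 (Nat.dvd_of_mem_divisors he)
        exact mul_nonneg e.cast_nonneg (ih e (lt_of_le_of_lt he' hd.2))
      have hsub : n.properDivisors ⊆ Finset.Icc 1 (n / 2) := by
        intro d hd
        rw [Nat.mem_properDivisors] at hd
        have hd0 : 0 < d := Nat.pos_of_dvd_of_pos hd.1 hn0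
        obtain ⟨k, hk⟩ := hd.1
        have hk2 : 2 ≤ k := by
          rcases Nat.lt_or_ge k 2 with h | h
          · interval_cases k <;> omega
          · exact h
        refine Finset.mem_Icc.mpr ⟨hd0, ?_⟩
        rw [Nat.le_div_iff_mul_le (by norm_num)]
        nlinarith
      have hsum_le : ∑ d ∈ n.properDivisors, (d:ℝ) * MFun q d ≤ q ^ n := by
        calc ∑ d ∈ n.properDivisors, (d:ℝ) * MFun q d
            ≤ ∑ d ∈ n.properDivisors, q ^ d := Finset.sum_le_sum hterm
          _ ≤ ∑ d ∈ Finset.Icc 1 (n / 2), q ^ d := by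
              refine Finset.sum_le_sum_of_subset_of_nonneg hsub ?_
              intro i _ _; positivity
          _ ≤ q ^ (n / 2 + 1) := sum_Icc_pow_le hq _
          _ ≤ q ^ n := pow_le_pow_right₀ (by linarith) (by omega)
      have hM : 0 ≤ (n:ℝ) * MFun q n := by linarith
      have hn' : (0:ℝ) < n := by exact_mod_cast hn0
      nlinarith

lemma mul_MFun_le {q : ℝ} (hq : 2 ≤ q) {n : ℕ} (hn : 0 < n) :
    (n:ℝ) * MFun q n ≤ q ^ n := by
  rw [← sum_divisors_mul_MFun q n hn]
  exact Finset.single_le_sum (f := fun e : ℕ => (e:ℝ) * MFun q e)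
    (fun e _ => mul_nonneg e.cast_nonneg (MFun_nonneg hq e)) (Nat.mem_divisors_self n hn.ne')

lemma mul_MFun_le_sub {q : ℝ} (hq : 2 ≤ q) {r : ℕ} (hr : 2 ≤ r) :
    (r:ℝ) * MFun q r ≤ q ^ r - q := by
  have h := sum_divisors_mul_MFun q r (by omega)
  rw [← Nat.cons_self_properDivisors (by omega : r ≠ 0), Finset.sum_cons] at h
  have h1 : (q:ℝ) ≤ ∑ d ∈ r.properDivisors, (d:ℝ) * MFun q d := by
    have hmem : (1:ℕ) ∈ r.properDivisors :=
      Nat.one_mem_properDivisors_iff_one_lt.mpr (by omega)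
    have := Finset.single_le_sum (f := fun d : ℕ => (d:ℝ) * MFun q d)
      (fun e _ => mul_nonneg e.cast_nonneg (MFun_nonneg hq e)) hmem
    simpa [MFun_one] using this
  linarith

/-- The cyclotomic-identity sum: `∑ M_n(q) · (−log(1−tⁿ)) = −log(1−qt)`. -/
lemma hasSum_MFun_neg_log {q t : ℝ} (hq : 2 ≤ q) (ht0 : 0 ≤ t) (hqt : q * t < 1) :
    HasSum (fun n : ℕ => MFun q n * (-Real.log (1 - t ^ n))) (-Real.log (1 - q * t)) := by
  have hq0 : (0:ℝ) < q := by linarith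
  have hq1 : (1:ℝ) ≤ q := by linarith
  have hqt0 : 0 ≤ q * t := mul_nonneg hq0.le ht0
  have ht1 : t < 1 := lt_of_le_of_lt (le_mul_of_one_le_left ht0 hq1) hqt
  set u : ℕ × ℕ → ℝ := fun nk => MFun q nk.1 * t ^ (nk.1 * (nk.2 + 1)) / (nk.2 + 1) with hu
  have hu0 : ∀ nk, 0 ≤ u nk := by
    intro nk
    have := MFun_nonneg hq nk.1
    have := pow_nonneg ht0 (nk.1 * (nk.2 + 1))
    have : (0:ℝ) < nk.2 + 1 := by positivity
    apply div_nonneg (mul_nonneg (MFun_nonneg hq _) (pow_nonneg ht0 _)) (by positivity)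
  have hub : ∀ nk : ℕ × ℕ, u nk ≤ (q*t)^nk.1 * (q*t)^nk.2 := by
    rintro ⟨n, k⟩
    rcases Nat.eq_zero_or_pos n with rfl | hn
    · simp only [hu, MFun_zero, zero_mul, zero_div]
      positivity
    · have hMle : MFun q n ≤ q ^ n := by
        have h1 := mul_MFun_le hq hn
        have hn1 : (1:ℝ) ≤ n := by exact_mod_cast hn
        nlinarith [MFun_nonneg hq n]
      have step1 : u (n, k) ≤ MFun q n * t ^ (n*(k+1)) := by
        apply div_le_self (mul_nonneg (MFun_nonneg hq n) (pow_nonneg ht0 _))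
        push_cast; linarith [Nat.cast_nonneg (α := ℝ) k]
      have step2 : MFun q n * t ^ (n*(k+1)) ≤ q^n * t^(n*(k+1)) :=
        mul_le_mul_of_nonneg_right hMle (pow_nonneg ht0 _)
      have step3 : q^n * t^(n*(k+1)) ≤ (q*t)^n * (q*t)^k := by
        have hexp : n*(k+1) = n + n*k := by ring
        rw [hexp, pow_add, mul_pow, mul_pow]
        have h4 : t ^ (n*k) ≤ t ^ k :=
          pow_le_pow_of_le_one ht0 ht1.le (Nat.le_mul_of_pos_left k hn)
        have h5 : t ^ k ≤ q ^ k * t ^ k :=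
          le_mul_of_one_le_left (pow_nonneg ht0 k) (one_le_pow₀ hq1)
        calc q^n * (t^n * t^(n*k)) = (q^n * t^n) * t^(n*k) := by ring
          _ ≤ (q^n * t^n) * t^k := by
              apply mul_le_mul_of_nonneg_left h4 (by positivity)
          _ ≤ (q^n * t^n) * (q^k * t^k) := by
              apply mul_le_mul_of_nonneg_left h5 (by positivity)
      exact step1.trans (step2.trans step3)
  have hv : Summable (fun nk : ℕ×ℕ => (q*t)^nk.1 * (q*t)^nk.2) :=
    (summable_geometric_of_lt_one hqt0 hqt).mul_of_nonneg
      (summable_geometric_of_lt_one hqt0 hqt)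
      (fun _ => pow_nonneg hqt0 _) (fun _ => pow_nonneg hqt0 _)
  have hus : Summable u := Summable.of_nonneg_of_le hu0 hub hv
  -- fiberwise over m = n*(k+1)
  have hfib : HasSum (fun m : ℕ =>
      ∑' x : (fun nk : ℕ×ℕ => nk.1*(nk.2+1)) ⁻¹' {m}, u x) (∑' nk, u nk) :=
    hus.hasSum.tsum_fiberwise _
  have hfib_eq : ∀ m : ℕ,
      (∑' x : (fun nk : ℕ×ℕ => nk.1*(nk.2+1)) ⁻¹' {m}, u x) = (q*t)^m / m := by
    intro m
    rcases Nat.eq_zero_or_pos m with rfl | hm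
    · rw [Nat.cast_zero, div_zero]
      have hz : ∀ x : (fun nk : ℕ×ℕ => nk.1*(nk.2+1)) ⁻¹' {(0:ℕ)}, u x = 0 := by
        rintro ⟨⟨n, k⟩, hx⟩
        simp only [Set.mem_preimage, Set.mem_singleton_iff] at hx
        have hn0 : n = 0 := by
          rcases Nat.mul_eq_zero.mp hx with h | h
          · exact h
          · omega
        subst hn0
        simp [hu, MFun_zero]
      exact (tsum_congr hz).trans tsum_zero
    · have hset : ((fun nk : ℕ×ℕ => nk.1*(nk.2+1)) ⁻¹' {m})
          = ↑(m.divisorsAntidiagonal.image (fun d => (d.1, d.2 - 1))) := by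
        ext ⟨a, b⟩
        simp only [Set.mem_preimage, Set.mem_singleton_iff, Finset.coe_image,
          Set.mem_image, Finset.mem_coe, Nat.mem_divisorsAntidiagonal]
        constructor
        · intro h
          exact ⟨(a, b+1), ⟨h, by omega⟩, by simp⟩
        · rintro ⟨⟨c, d⟩, ⟨hcd, hm0⟩, h2⟩
          have hd0 : 0 < d := by
            rcases Nat.eq_zero_or_pos d with rfl | h
            · simp at hcd; omega
            · exact h
          obtain ⟨h3, h4⟩ := Prod.ext_iff.mp h2
          simp only at h3 h4
          rw [← h3, show b + 1 = d by omega]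
          exact hcd
      have hinj : ∀ x ∈ m.divisorsAntidiagonal, ∀ y ∈ m.divisorsAntidiagonal,
          (fun d : ℕ × ℕ => (d.1, d.2 - 1)) x = (fun d : ℕ × ℕ => (d.1, d.2 - 1)) y → x = y := by
        intro x hx y hy hxy
        rw [Nat.mem_divisorsAntidiagonal] at hx hy
        have hx2 : 0 < x.2 := by
          rcases Nat.eq_zero_or_pos x.2 with h | h
          · rw [h] at hx; simp at hx; omega
          · exact h
        have hy2 : 0 < y.2 := by
          rcases Nat.eq_zero_or_pos y.2 with h | h
          · rw [h] at hy; simp at hy; omega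
          · exact h
        obtain ⟨h1, h2⟩ := Prod.ext_iff.mp hxy
        simp only at h1 h2
        exact Prod.ext h1 (by omega)
      rw [hset, Finset.tsum_subtype']
      rw [Finset.sum_image hinj]
      have hterm : ∀ d ∈ m.divisorsAntidiagonal,
          u (d.1, d.2 - 1) = ((d.1:ℝ) * MFun q d.1) * (t ^ m / m) := by
        intro d hd
        rw [Nat.mem_divisorsAntidiagonal] at hd
        obtain ⟨hdm, hm0⟩ := hd
        have h1 : 0 < d.1 := by
          rcases Nat.eq_zero_or_pos d.1 with h | h
          · rw [h] at hdm; simp at hdm; omega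
          · exact h
        have h2 : 0 < d.2 := by
          rcases Nat.eq_zero_or_pos d.2 with h | h
          · rw [h] at hdm; simp at hdm; omega
          · exact h
        have hexp : d.2 - 1 + 1 = d.2 := by omega
        have hcastd : ((d.2 - 1 : ℕ) : ℝ) + 1 = (d.2 : ℝ) := by
          rw [Nat.cast_sub h2]; ring
        have hmcast : (m:ℝ) = (d.1:ℝ) * (d.2:ℝ) := by exact_mod_cast hdm.symm
        simp only [hu]
        rw [hexp, hcastd, hdm]
        have hd2 : (d.2:ℝ) ≠ 0 := by positivity
        have hmne : (m:ℝ) ≠ 0 := by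
          have : (0:ℝ) < m := by exact_mod_cast hm
          positivity
        field_simp
        rw [hmcast]; ring
      rw [Finset.sum_congr rfl hterm, ← Finset.sum_mul]
      rw [Nat.sum_divisorsAntidiagonal (f := fun x _ => (x:ℝ) * MFun q x)]
      rw [sum_divisors_mul_MFun q m hm, mul_pow]
      ring
  -- the target series for (q*t)^m/m
  have hw : HasSum (fun m : ℕ => (q*t)^m / m) (-Real.log (1 - q*t)) := by
    have h0 := Real.hasSum_pow_div_log_of_abs_lt_one
      (x := q*t) (by rw [abs_of_nonneg hqt0]; exact hqt)
    have h1 : HasSum (fun n : ℕ => (q*t)^(n+1) / ((n+1 : ℕ) : ℝ))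
        (-Real.log (1 - q*t)) := by
      convert h0 using 2 with n
      push_cast; ring
    have h2 := (hasSum_nat_add_iff (f := fun m : ℕ => (q*t)^m / ((m:ℕ):ℝ)) 1).mp h1
    simpa using h2
  have hS : (∑' nk, u nk) = -Real.log (1 - q*t) := by
    have h3 : HasSum (fun m : ℕ => (q*t)^m / m) (∑' nk, u nk) := by
      simpa only [hfib_eq] using hfib
    exact h3.unique hw
  have hrow : ∀ n : ℕ, HasSum (fun k => u (n, k))
      (MFun q n * (-Real.log (1 - t ^ n))) := by
    intro n
    rcases Nat.eq_zero_or_pos n with rfl | hn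
    · have hz : (fun k : ℕ => u (0, k)) = fun _ => (0:ℝ) := by
        funext k; simp [hu, MFun_zero]
      rw [hz, MFun_zero, zero_mul]
      exact hasSum_zero
    · have htn : |t ^ n| < 1 := by
        rw [abs_of_nonneg (pow_nonneg ht0 _)]
        exact pow_lt_one₀ ht0 ht1 hn.ne'
      have h0 := (Real.hasSum_pow_div_log_of_abs_lt_one htn).mul_left (MFun q n)
      convert h0 using 2 with k
      · rfl
      simp only [hu]
      rw [← pow_mul]
      push_cast; ring
  have := hus.hasSum.prod_fiberwise hrow
  rwa [hS] at this

/-- `∑ M_n(q) · log(1+tⁿ) = log(1−qt²) − log(1−qt)`. -/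
lemma hasSum_MFun_log_one_add {q t : ℝ} (hq : 2 ≤ q) (ht0 : 0 ≤ t) (hqt : q * t < 1) :
    HasSum (fun n : ℕ => MFun q n * Real.log (1 + t ^ n))
      (Real.log (1 - q * t^2) - Real.log (1 - q * t)) := by
  have hq0 : (0:ℝ) < q := by linarith
  have hq1 : (1:ℝ) ≤ q := by linarith
  have ht1 : t < 1 := lt_of_le_of_lt (le_mul_of_one_le_left ht0 hq1) hqt
  have hqt2 : q * t^2 < 1 := by nlinarith
  have h1 := hasSum_MFun_neg_log hq ht0 hqt
  have h2 := hasSum_MFun_neg_log hq (t := t^2) (by positivity) hqt2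
  have h3 := h1.sub h2
  have heq : (fun n : ℕ => MFun q n * (-Real.log (1 - t ^ n))
      - MFun q n * (-Real.log (1 - (t^2) ^ n)))
      = fun n : ℕ => MFun q n * Real.log (1 + t ^ n) := by
    funext n
    rcases Nat.eq_zero_or_pos n with rfl | hn
    · rw [MFun_zero]; ring
    · have htn1 : t ^ n < 1 := pow_lt_one₀ ht0 ht1 hn.ne'
      have htn0 : 0 ≤ t ^ n := pow_nonneg ht0 _
      have hfac : 1 - (t^2)^n = (1 - t^n) * (1 + t^n) := by
        rw [← pow_mul, mul_comm 2 n, pow_mul]; ring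
      rw [hfac, Real.log_mul (by linarith) (by linarith)]
      ring
  rw [heq] at h3
  convert h3 using 1
  · rfl
  ring

lemma abs_log_one_add_le {x a : ℝ} (h : |x| ≤ a) (ha : a < 1) :
    |Real.log (1 + x)| ≤ -Real.log (1 - a) := by
  have ha0 : 0 ≤ a := (abs_nonneg x).trans h
  have h1 : 0 < 1 - a := by linarith
  obtain ⟨hl, hr⟩ := abs_le.mp h
  have hx1 : 1 - a ≤ 1 + x := by linarith
  have hx2 : 1 + x ≤ 1 + a := by linarith
  rw [abs_le]
  constructor
  · rw [neg_neg]
    exact Real.log_le_log h1 hx1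
  · calc Real.log (1+x) ≤ Real.log (1+a) := Real.log_le_log (by linarith) hx2
      _ ≤ -Real.log (1-a) := by
        have hmul : Real.log (1+a) + Real.log (1-a) = Real.log ((1+a)*(1-a)) :=
          (Real.log_mul (by linarith) (by linarith)).symm
        have h2 : Real.log ((1+a)*(1-a)) ≤ 0 :=
          Real.log_nonpos (by nlinarith) (by nlinarith)
        linarith

lemma summable_logterms {q δ : ℝ} (hq : 2 ≤ q) (hδ0 : 0 < δ) (hδ1 : δ < 1)
    {p' : ℕ → ℝ} (hp' : ∀ n, 1 ≤ n → |p' n| ≤ (δ/q)^n) :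
    Summable (fun n => MFun q n * Real.log (1 + p' n)) := by
  have hq0 : (0:ℝ) < q := by linarith
  have hε0 : 0 < δ/q := div_pos hδ0 hq0
  have hε1 : δ/q < 1 := by rw [div_lt_one hq0]; linarith
  have hqε : q * (δ/q) = δ := by field_simp
  have hmaj := (hasSum_MFun_neg_log hq hε0.le (by rw [hqε]; exact hδ1)).summable
  refine Summable.of_norm_bounded hmaj ?_
  intro n
  rcases Nat.eq_zero_or_pos n with rfl | hn
  · simp [MFun_zero]
  · have hεn1 : (δ/q)^n < 1 := pow_lt_one₀ hε0.le hε1 hn.ne'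
    have habs := abs_log_one_add_le (hp' n hn) hεn1
    rw [Real.norm_eq_abs, abs_mul, abs_of_nonneg (MFun_nonneg hq n)]
    have hM := MFun_nonneg hq n
    calc MFun q n * |Real.log (1 + p' n)|
        ≤ MFun q n * (-Real.log (1 - (δ/q)^n)) := mul_le_mul_of_nonneg_left habs hM
      _ = MFun q n * (-Real.log (1 - (δ/q)^n)) := rfl

lemma tsum_logterms_le {q δ : ℝ} (hq : 2 ≤ q) (hδ0 : 0 < δ) (hδ1 : δ < 1)
    {p' : ℕ → ℝ} (hp' : ∀ n, 1 ≤ n → |p' n| ≤ (δ/q)^n) :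
    ∑' n, MFun q n * Real.log (1 + p' n)
      ≤ Real.log (1 - q*(δ/q)^2) - Real.log (1 - q*(δ/q)) := by
  have hq0 : (0:ℝ) < q := by linarith
  have hε0 : 0 < δ/q := div_pos hδ0 hq0
  have hε1 : δ/q < 1 := by rw [div_lt_one hq0]; linarith
  have hqε : q * (δ/q) = δ := by field_simp
  have hB := hasSum_MFun_log_one_add hq (t := δ/q) hε0.le (by rw [hqε]; exact hδ1)
  have hle : ∀ n : ℕ, MFun q n * Real.log (1 + p' n)
      ≤ MFun q n * Real.log (1 + (δ/q)^n) := by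
    intro n
    rcases Nat.eq_zero_or_pos n with rfl | hn
    · simp [MFun_zero]
    · have hεn1 : (δ/q)^n < 1 := pow_lt_one₀ hε0.le hε1 hn.ne'
      obtain ⟨hl, hr⟩ := abs_le.mp (hp' n hn)
      refine mul_le_mul_of_nonneg_left ?_ (MFun_nonneg hq n)
      exact Real.log_le_log (by linarith) (by linarith)
  calc ∑' n, MFun q n * Real.log (1 + p' n)
      ≤ ∑' n, MFun q n * Real.log (1 + (δ/q)^n) :=
        Summable.tsum_le_tsum hle (summable_logterms hq hδ0 hδ1 hp') hB.summable
    _ = _ := hB.tsum_eq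

lemma Hfun_eq_exp {q : ℝ} {p' : ℕ → ℝ} (hpos : ∀ n, 1 ≤ n → 0 < 1 + p' n)
    (hsum : Summable (fun n => MFun q n * Real.log (1 + p' n))) :
    Hfun q p' = Real.exp (∑' n, MFun q n * Real.log (1 + p' n)) := by
  have h := hsum.hasSum.rexp
  have h2 : ∀ n : ℕ, Real.exp (MFun q n * Real.log (1 + p' n))
      = (1 + p' n) ^ (MFun q n) := by
    intro n
    rcases Nat.eq_zero_or_pos n with rfl | hn
    · rw [MFun_zero, zero_mul, Real.exp_zero, Real.rpow_zero]
    · rw [Real.rpow_def_of_pos (hpos n hn), mul_comm]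
  have h3 : HasProd (fun n => (1 + p' n) ^ MFun q n)
      (Real.exp (∑' n, MFun q n * Real.log (1 + p' n))) := by
    have : (Real.exp ∘ fun n => MFun q n * Real.log (1 + p' n))
        = fun n => (1 + p' n) ^ MFun q n := by
      funext n; exact h2 n
    rwa [this] at h
  exact h3.tprod_eq

end C1Aux

set_option maxHeartbeats 1000000 in
open C1Aux Real Filter Function Topology in
/-- For `q ≥ 2`, `0 < δ < 1`, an integer `r ≥ 2` and `|p_n| < δ^n/q^n` for all `n ≥ 1`,
the partial derivative `∂_r c_1^{(q)}(p)` exists and satisfies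
`|∂_r c_1^{(q)}(p)| < (q^{r−1}/(r(q − 1)(1 − q^{−r}))) · (1 − δ²/q)/(1 − δ)`. -/
theorem abs_deriv_c1_higher_variable_lt (q δ : ℝ) (hq : 2 ≤ q) (hδ0 : 0 < δ) (hδ1 : δ < 1)
    (r : ℕ) (hr : 2 ≤ r)
    (p : ℕ → ℝ) (hp : ∀ n : ℕ, 1 ≤ n → |p n| < δ ^ n / q ^ n) :
    ∃ D : ℝ,
      HasDerivAt (fun t : ℝ => c1Fun q (Function.update p r t)) D (p r) ∧
      |D| < (q ^ (r - 1) / ((r : ℝ) * (q - 1) * (1 - (q ^ r)⁻¹)))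
              * ((1 - δ ^ 2 / q) / (1 - δ)) := by
  classical
  have hq0 : (0:ℝ) < q := by linarith
  have hq1 : (1:ℝ) < q := by linarith
  set ε : ℝ := δ / q with hε
  have hε0 : 0 < ε := div_pos hδ0 hq0
  have hqε : q * ε = δ := by rw [hε]; field_simp
  have hqε2 : q * ε^2 = δ^2/q := by rw [hε]; field_simp
  have hε1 : ε < 1 := by rw [hε, div_lt_one hq0]; linarith
  have hpω : ∀ n, 1 ≤ n → |p n| < ε ^ n := by
    intro n hn; rw [hε, div_pow]; exact hp n hn
  have hr0 : 0 < r := by omega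
  have h1r : (1:ℕ) ≠ r := by omega
  have hεr1 : ε ^ r < 1 := pow_lt_one₀ hε0.le hε1 (by omega)
  have hpr : |p r| < ε ^ r := hpω r (by omega)
  set R : ℝ := ∑' n, (if n = r then 0 else MFun q n * Real.log (1 + p n)) with hR
  set Mr := MFun q r with hMr
  -- description of Hfun near p r
  have key : ∀ t : ℝ, |t| < ε^r →
      Hfun q (Function.update p r t) = (1+t) ^ Mr * Real.exp R := by
    intro t ht
    have hb : ∀ n, 1 ≤ n → |Function.update p r t n| ≤ ε ^ n := by
      intro n hn
      rcases eq_or_ne n r with rfl | hne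
      · rw [Function.update_self]; exact ht.le
      · rw [Function.update_of_ne hne]; exact (hpω n hn).le
    have hpos : ∀ n, 1 ≤ n → 0 < 1 + Function.update p r t n := by
      intro n hn
      have h1 : |Function.update p r t n| < 1 :=
        lt_of_le_of_lt (hb n hn) (pow_lt_one₀ hε0.le hε1 (by omega))
      have := (abs_lt.mp h1).1
      linarith
    have hsum := summable_logterms hq hδ0 hδ1 (p' := Function.update p r t) hb
    rw [Hfun_eq_exp hpos hsum]
    rw [Summable.tsum_eq_add_tsum_ite hsum r]
    have hite : (fun n => if n = r then 0
          else MFun q n * Real.log (1 + Function.update p r t n))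
        = (fun n => if n = r then 0 else MFun q n * Real.log (1 + p n)) := by
      funext n
      split_ifs with h
      · rfl
      · rw [Function.update_of_ne h]
    have ht1 : (0:ℝ) < 1 + t := by
      have := (abs_lt.mp (ht.trans hεr1)).1; linarith
    rw [show (∑' n, if n = r then 0
          else MFun q n * Real.log (1 + Function.update p r t n)) = R by
        rw [hR]; exact congrArg tsum hite]
    rw [Function.update_self, Real.exp_add, Real.rpow_def_of_pos ht1, mul_comm (Real.log (1+t)) Mr]
  -- derivative of the model function
  have h1t : (0:ℝ) < 1 + p r := by
    have := (abs_lt.mp (hpr.trans hεr1)).1; linarith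
  have hd1 : HasDerivAt (fun t : ℝ => 1 + t) 1 (p r) := by
    simpa using (hasDerivAt_id (p r)).const_add 1
  have hd2 : HasDerivAt (fun t : ℝ => (1+t) ^ Mr)
      (1 * Mr * (1 + p r) ^ (Mr - 1)) (p r) :=
    hd1.rpow_const (Or.inl h1t.ne')
  have hd3 : HasDerivAt
      (fun t : ℝ => q * p 1 / (q-1) - ((1+t)^Mr * Real.exp R - 1)/(q*(q-1)))
      (-((1 * Mr * (1 + p r) ^ (Mr - 1)) * Real.exp R / (q*(q-1)))) (p r) :=
    (((hd2.mul_const (Real.exp R)).sub_const 1).div_const (q*(q-1))).const_sub _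
  have hmem : Set.Ioo (-(ε^r)) (ε^r) ∈ 𝓝 (p r) :=
    Ioo_mem_nhds (abs_lt.mp hpr).1 (abs_lt.mp hpr).2
  have heq : (fun t => c1Fun q (Function.update p r t))
      =ᶠ[𝓝 (p r)] (fun t => q * p 1 / (q-1) - ((1+t)^Mr * Real.exp R - 1)/(q*(q-1))) := by
    filter_upwards [hmem] with t ht
    rw [c1Fun, Function.update_of_ne h1r, key t (abs_lt.mpr ⟨ht.1, ht.2⟩)]
  refine ⟨_, hd3.congr_of_eventuallyEq heq, ?_⟩
  -- now the bound
  have hMrpos : 0 ≤ Mr := MFun_nonneg hq r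
  have hsumf : Summable (fun n => MFun q n * Real.log (1 + p n)) :=
    summable_logterms hq hδ0 hδ1 (fun n hn => (hpω n hn).le)
  set Sfull := ∑' n, MFun q n * Real.log (1 + p n) with hSfull
  have hsplit : Sfull = Mr * Real.log (1 + p r) + R := by
    rw [hSfull, Summable.tsum_eq_add_tsum_ite hsumf r, hR]
  have hexpR : (1 + p r) ^ (Mr - 1) * Real.exp R
      = Real.exp (Sfull - Real.log (1 + p r)) := by
    rw [hsplit, show Mr * Real.log (1+p r) + R - Real.log (1+p r)
      = (Mr - 1) * Real.log (1+p r) + R by ring]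
    rw [Real.exp_add, Real.rpow_def_of_pos h1t, mul_comm (Real.log (1+p r)) (Mr-1)]
  have hLF : Sfull ≤ Real.log (1 - δ^2/q) - Real.log (1 - δ) := by
    have := tsum_logterms_le hq hδ0 hδ1 (p' := p) (fun n hn => (hpω n hn).le)
    rw [← hε, hqε, hqε2] at this
    exact this
  -- log bound at r
  have hqr1 : (1:ℝ) < q^r := one_lt_pow₀ hq1 (by omega)
  have hqrinv : (0:ℝ) < 1 - (q^r)⁻¹ := by
    have := inv_lt_one_of_one_lt₀ hqr1
    linarith
  have hεrq : ε ^ r < (q ^ r)⁻¹ := by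
    rw [← inv_pow]
    refine pow_lt_pow_left₀ ?_ hε0.le (by omega)
    rw [hε, div_eq_mul_inv]
    nlinarith [inv_pos.mpr hq0]
  have hlogpr : Real.log (1 - (q^r)⁻¹) ≤ Real.log (1 + p r) := by
    apply Real.log_le_log hqrinv
    have h1 := (abs_lt.mp hpr).1
    linarith [hεrq]
  have hδq : (0:ℝ) < 1 - δ^2/q := by
    rw [sub_pos, div_lt_one hq0]
    nlinarith
  have hδ1' : (0:ℝ) < 1 - δ := by linarith
  have hq10 : (0:ℝ) < q * (q - 1) := by nlinarith
  have habs : |(-((1 * Mr * (1 + p r) ^ (Mr - 1)) * Real.exp R / (q*(q-1))))|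
      = Mr * ((1 + p r) ^ (Mr - 1) * Real.exp R) / (q*(q-1)) := by
    rw [abs_neg, abs_div, abs_of_pos hq10, abs_of_nonneg ?_]
    · ring
    · have h2 : (0:ℝ) ≤ (1 + p r) ^ (Mr - 1) := (Real.rpow_pos_of_pos h1t _).le
      have h3 : (0:ℝ) ≤ Real.exp R := (Real.exp_pos R).le
      positivity
  rw [habs, hexpR]
  have hexp_le : Real.exp (Sfull - Real.log (1 + p r))
      ≤ ((1 - δ^2/q)/(1-δ)) * (1 - (q^r)⁻¹)⁻¹ := by
    have h1 : Sfull - Real.log (1 + p r)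
        ≤ (Real.log (1 - δ^2/q) - Real.log (1-δ)) - Real.log (1 - (q^r)⁻¹) := by
      linarith [hLF, hlogpr]
    calc Real.exp (Sfull - Real.log (1 + p r))
        ≤ Real.exp ((Real.log (1 - δ^2/q) - Real.log (1-δ)) - Real.log (1 - (q^r)⁻¹)) :=
          Real.exp_le_exp.mpr h1
      _ = ((1 - δ^2/q)/(1-δ)) * (1 - (q^r)⁻¹)⁻¹ := by
          rw [Real.exp_sub, Real.exp_sub, Real.exp_log hδq, Real.exp_log hδ1',
            Real.exp_log hqrinv]
          ring
  have hrpos : (0:ℝ) < r := by exact_mod_cast hr0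
  have hMrlt : Mr < q^r / r := by
    have h1 := mul_MFun_le_sub hq hr
    have h2 : (r:ℝ) * Mr < q ^ r := by linarith
    have h3 : Mr = ((r:ℝ) * Mr) / r := by field_simp
    rw [h3]
    gcongr
  have hKpos : (0:ℝ) < ((1 - δ^2/q)/(1-δ)) * (1 - (q^r)⁻¹)⁻¹ := by positivity
  calc Mr * Real.exp (Sfull - Real.log (1 + p r)) / (q*(q-1))
      ≤ Mr * (((1 - δ^2/q)/(1-δ)) * (1 - (q^r)⁻¹)⁻¹) / (q*(q-1)) := by
        gcongr
      _ < (q^r/r) * (((1 - δ^2/q)/(1-δ)) * (1 - (q^r)⁻¹)⁻¹) / (q*(q-1)) := by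
        gcongr
      _ = (q ^ (r - 1) / ((r : ℝ) * (q - 1) * (1 - (q ^ r)⁻¹))) * ((1 - δ ^ 2 / q) / (1 - δ)) := by
        have hqr : (q:ℝ)^r = q^(r-1) * q := by rw [← pow_succ]; congr 1; omega
        have hrne : ((r:ℝ)) ≠ 0 := hrpos.ne'
        have hq1ne : (q:ℝ) - 1 ≠ 0 := by linarith
        have hδ1ne : (1:ℝ) - δ ≠ 0 := hδ1'.ne'
        obtain ⟨X, hX⟩ : ∃ X, (1:ℝ) - (q^r)⁻¹ = X := ⟨_, rfl⟩
        have hXne : X ≠ 0 := hX ▸ hqrinv.ne'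
        rw [hX, hqr]
        field_simp
end

section
/- Let q ≥ 2 be a real number, let s ≥ 1 and m ≥ 2s + 1 be integers, and let 0 < δ ≤ 1 − 3/(q^{2s+1} − 1). Let p = (p_1, p_2, …) be a real sequence with |p_n| < δ^n/q^n for all n ≥ 1, and set x = (p_m, p_{2m}, p_{3m}, …). Then |∂_1 c_1^{(q^m)}(x)| > ( q^m/(q^m − 1) ) · ( 1 − (1 − q^{−m} δ^{2m}) / ( q^m (1 − δ^m)(1 − q^{−m}) ) ), and this lower bound is strictly positive. -/
open Finset Real

private noncomputable def nMu (Q : ℝ) (n : ℕ) : ℝ :=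
  ∑ d ∈ n.divisors, (ArithmeticFunction.moebius (n / d) : ℝ) * Q ^ d

private lemma MFun_eq_nMu (Q : ℝ) (n : ℕ) : MFun Q n = (1 / (n : ℝ)) * nMu Q n := rfl

private lemma abs_moebius_le_one' (k : ℕ) : |(ArithmeticFunction.moebius k : ℝ)| ≤ 1 := by
  by_cases h : Squarefree k
  · rw [ArithmeticFunction.moebius_apply_of_squarefree h]
    push_cast
    rw [abs_pow, abs_neg, abs_one, one_pow]
  · rw [ArithmeticFunction.moebius_eq_zero_of_not_squarefree h]
    norm_num

private lemma nMu_nonneg {Q : ℝ} (hQ : 2 ≤ Q) {n : ℕ} (hn : 1 ≤ n) : 0 ≤ nMu Q n := by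
  have hQ0 : (0:ℝ) < Q := by linarith
  have hQ1 : (1:ℝ) ≤ Q := by linarith
  have hn0 : n ≠ 0 := by omega
  have hmem : n ∈ n.divisors := Nat.mem_divisors_self n hn0
  rw [nMu, ← Finset.sum_erase_add _ _ hmem, Nat.div_self (by omega),
      ArithmeticFunction.moebius_apply_one]
  have hterm : ∀ d ∈ n.divisors.erase n,
      -(Q ^ (n/2)) ≤ (ArithmeticFunction.moebius (n / d) : ℝ) * Q ^ d := by
    intro d hd
    obtain ⟨hdn, hdvd⟩ := Finset.mem_erase.mp hd
    have hdd : d ∣ n := (Nat.mem_divisors.mp hdvd).1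
    have hd0 : 0 < d := Nat.pos_of_mem_divisors hdvd
    have hdle : d ≤ n / 2 := by
      obtain ⟨c, hc⟩ := hdd
      have hc2 : 2 ≤ c := by
        rcases Nat.lt_or_ge c 2 with h'|h'
        · interval_cases c <;> omega
        · exact h'
      have : d * 2 ≤ n := by
        calc d * 2 ≤ d * c := Nat.mul_le_mul_left d hc2
        _ = n := hc.symm
      exact (Nat.le_div_iff_mul_le (by norm_num)).mpr this
    have hmu := abs_le.mp (abs_moebius_le_one' (n / d))
    have hQd : (0:ℝ) < Q ^ d := pow_pos hQ0 d
    have hQdle : Q ^ d ≤ Q ^ (n/2) := pow_le_pow_right₀ hQ1 hdle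
    nlinarith [hmu.1, hmu.2]
  have hcard : (n.divisors.erase n).card ≤ n / 2 := by
    have hsub : n.divisors.erase n ⊆ Finset.Icc 1 (n/2) := by
      intro d hd
      obtain ⟨hdn, hdvd⟩ := Finset.mem_erase.mp hd
      have hdd : d ∣ n := (Nat.mem_divisors.mp hdvd).1
      have hd0 : 0 < d := Nat.pos_of_mem_divisors hdvd
      have hdle : d ≤ n / 2 := by
        obtain ⟨c, hc⟩ := hdd
        have hc2 : 2 ≤ c := by
          rcases Nat.lt_or_ge c 2 with h'|h'
          · interval_cases c <;> omega
          · exact h'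
        have : d * 2 ≤ n := by
          calc d * 2 ≤ d * c := Nat.mul_le_mul_left d hc2
          _ = n := hc.symm
        exact (Nat.le_div_iff_mul_le (by norm_num)).mpr this
      exact Finset.mem_Icc.mpr ⟨hd0, hdle⟩
    calc (n.divisors.erase n).card ≤ (Finset.Icc 1 (n/2)).card := Finset.card_le_card hsub
    _ = n / 2 := by rw [Nat.card_Icc]; omega
  have hsum : -(((n/2 : ℕ) : ℝ) * Q ^ (n/2)) ≤ ∑ d ∈ n.divisors.erase n,
      (ArithmeticFunction.moebius (n / d) : ℝ) * Q ^ d := by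
    have h1 := Finset.card_nsmul_le_sum (n.divisors.erase n)
      (fun d => (ArithmeticFunction.moebius (n / d) : ℝ) * Q ^ d) (-(Q ^ (n/2))) hterm
    rw [nsmul_eq_mul] at h1
    have h2 : ((n.divisors.erase n).card : ℝ) ≤ ((n/2 : ℕ) : ℝ) := by exact_mod_cast hcard
    have h3 : (0:ℝ) < Q ^ (n/2) := pow_pos hQ0 _
    nlinarith
  have hhalf : ((n/2 : ℕ) : ℝ) * Q ^ (n/2) ≤ Q ^ n := by
    have h1 : ((n/2 : ℕ) : ℝ) ≤ Q ^ (n - n/2) := by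
      have ha : (n/2 : ℕ) ≤ 2 ^ (n - n/2) := by
        have := Nat.lt_two_pow_self (n := n/2)
        have h2 : (2:ℕ) ^ (n/2) ≤ 2 ^ (n - n/2) := Nat.pow_le_pow_right (by norm_num) (by omega)
        omega
      have hb : ((2:ℕ):ℝ) ^ (n - n/2) ≤ Q ^ (n - n/2) := by
        apply pow_le_pow_left₀ (by norm_num) (by exact_mod_cast hQ)
      calc ((n/2 : ℕ) : ℝ) ≤ ((2 ^ (n - n/2) : ℕ) : ℝ) := by exact_mod_cast ha
      _ = ((2:ℕ):ℝ) ^ (n - n/2) := by push_cast; ring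
      _ ≤ Q ^ (n - n/2) := hb
    have h3 : (0:ℝ) < Q ^ (n/2) := pow_pos hQ0 _
    calc ((n/2 : ℕ) : ℝ) * Q ^ (n/2) ≤ Q ^ (n - n/2) * Q ^ (n/2) :=
      mul_le_mul_of_nonneg_right h1 h3.le
    _ = Q ^ n := by rw [← pow_add]; congr 1; omega
  push_cast
  nlinarith

private lemma nMu_abs_le {Q : ℝ} (hQ : 1 ≤ Q) (n : ℕ) : |nMu Q n| ≤ (n : ℝ) * Q ^ n := by
  rcases Nat.eq_zero_or_pos n with rfl | hn
  · simp [nMu]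
  have hQ0 : (0:ℝ) < Q := by linarith
  calc |nMu Q n| ≤ ∑ d ∈ n.divisors, |(ArithmeticFunction.moebius (n / d) : ℝ) * Q ^ d| :=
        Finset.abs_sum_le_sum_abs _ _
  _ ≤ ∑ d ∈ n.divisors, Q ^ n := by
      apply Finset.sum_le_sum
      intro d hd
      have hd' : d ≤ n := Nat.divisor_le hd
      rw [abs_mul, abs_pow, abs_of_pos hQ0]
      calc |(ArithmeticFunction.moebius (n / d) : ℝ)| * Q ^ d ≤ 1 * Q ^ d :=
            mul_le_mul_of_nonneg_right (abs_moebius_le_one' _) (pow_pos hQ0 d).le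
      _ = Q ^ d := one_mul _
      _ ≤ Q ^ n := pow_le_pow_right₀ hQ hd'
  _ = (n.divisors.card : ℝ) * Q ^ n := by rw [Finset.sum_const, nsmul_eq_mul]
  _ ≤ (n : ℝ) * Q ^ n := by
      apply mul_le_mul_of_nonneg_right _ (pow_pos hQ0 n).le
      have : n.divisors.card ≤ n := by
        have hsub : n.divisors ⊆ Finset.Icc 1 n := by
          intro d hd
          exact Finset.mem_Icc.mpr ⟨Nat.pos_of_mem_divisors hd, Nat.divisor_le hd⟩
        calc n.divisors.card ≤ (Finset.Icc 1 n).card := Finset.card_le_card hsub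
        _ = n := by rw [Nat.card_Icc]; omega
      exact_mod_cast this

private lemma sum_nMu (Q : ℝ) : ∀ n > 0, ∑ d ∈ n.divisors, nMu Q d = Q ^ n := by
  rw [ArithmeticFunction.sum_eq_iff_sum_smul_moebius_eq (f := nMu Q) (g := fun k => Q ^ k)]
  intro n hn
  rw [Nat.sum_divisorsAntidiagonal'
    (f := fun a b => (ArithmeticFunction.moebius a) • ((fun k : ℕ => Q ^ k) b))]
  simp only [zsmul_eq_mul, nMu]

private lemma hasProd_exp' {L : ℕ → ℝ} {S : ℝ} (h : HasSum L S) :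
    HasProd (fun n => Real.exp (L n)) (Real.exp S) := by
  have h2 : (fun s : Finset ℕ => ∏ b ∈ s, Real.exp (L b))
      = fun s : Finset ℕ => Real.exp (∑ b ∈ s, L b) := by
    funext s; rw [Real.exp_sum]
  unfold HasProd
  rw [h2]
  exact (Real.continuous_exp.tendsto S).comp h

private lemma abs_log_one_add_le' {x : ℝ} (hx : |x| ≤ 1/2) : |Real.log (1+x)| ≤ 2 * |x| := by
  obtain ⟨h1, h2⟩ := abs_le.mp hx
  have h1x : (0:ℝ) < 1 + x := by linarith
  rw [abs_le]
  constructor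
  · have := Real.log_le_sub_one_of_pos (inv_pos.mpr h1x)
    rw [Real.log_inv] at this
    have hxa : -x ≤ |x| := neg_le_abs x
    have heq : (1 + x)⁻¹ - 1 = -x * (1+x)⁻¹ := by field_simp; ring
    have hinv : (1 + x)⁻¹ ≤ 2 := by
      rw [inv_le_comm₀ (by linarith) (by norm_num)]
      linarith
    nlinarith [abs_nonneg x, inv_pos.mpr h1x]
  · have h3 := Real.log_le_sub_one_of_pos h1x
    have h4 := le_abs_self x
    nlinarith [abs_nonneg x]

set_option maxHeartbeats 2000000 in
/-- For `q ≥ 2`, integers `s ≥ 1` and `m ≥ 2s + 1`, `0 < δ ≤ 1 − 3/(q^{2s+1} − 1)`, and a real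
sequence `p` with `|p_n| < δ^n/q^n` for all `n ≥ 1`, consider the subsequence
`x = (p_m, p_{2m}, …)`, i.e. `x k = p (k·m)`. Then the partial derivative
`∂_1 c_1^{(q^m)}(x)` exists and satisfies
`|∂_1 c_1^{(q^m)}(x)| > (q^m/(q^m − 1)) · (1 − (1 − q^{−m} δ^{2m})/(q^m (1 − δ^m)(1 − q^{−m})))`,
and this lower bound is strictly positive. -/
theorem abs_deriv_c1_subsequence_gt (q δ : ℝ) (hq : 2 ≤ q) (s m : ℕ)
    (hs : 1 ≤ s) (hm : 2 * s + 1 ≤ m)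
    (hδ0 : 0 < δ) (hδ1 : δ ≤ 1 - 3 / (q ^ (2 * s + 1) - 1))
    (p : ℕ → ℝ) (hp : ∀ n : ℕ, 1 ≤ n → |p n| < δ ^ n / q ^ n) :
    ∃ D : ℝ,
      HasDerivAt
        (fun t : ℝ => c1Fun (q ^ m) (Function.update (fun k : ℕ => p (k * m)) 1 t)) D (p m) ∧
      (q ^ m / (q ^ m - 1))
          * (1 - (1 - (q ^ m)⁻¹ * δ ^ (2 * m))
                / (q ^ m * (1 - δ ^ m) * (1 - (q ^ m)⁻¹))) < |D| ∧
      0 < (q ^ m / (q ^ m - 1))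
          * (1 - (1 - (q ^ m)⁻¹ * δ ^ (2 * m))
                / (q ^ m * (1 - δ ^ m) * (1 - (q ^ m)⁻¹))) := by
  have hq0 : (0:ℝ) < q := by linarith
  have hq1 : (1:ℝ) ≤ q := by linarith
  have hm1 : 1 ≤ m := by omega
  set x : ℕ → ℝ := fun k : ℕ => p (k * m) with hxdef
  set Q : ℝ := q ^ m with hQdef
  set a : ℝ := δ ^ m with hadef
  have hδ2m : δ ^ (2 * m) = a ^ 2 := by
    rw [hadef, two_mul, pow_add]
    ring
  rw [hδ2m]
  have hQ2 : (2:ℝ) ≤ Q := by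
    calc (2:ℝ) = 2 ^ 1 := by norm_num
    _ ≤ (2:ℝ) ^ m := pow_le_pow_right₀ one_le_two hm1
    _ ≤ q ^ m := pow_le_pow_left₀ (by norm_num) hq m
  have hQ0 : (0:ℝ) < Q := by linarith
  have hQ1 : (1:ℝ) < Q := by linarith
  have hQ1' : (0:ℝ) < Q - 1 := by linarith
  -- δ < 1 and the key inequality (1-a)(Q-1) ≥ 3
  have hP1 : (1:ℝ) < q ^ (2 * s + 1) := one_lt_pow₀ (by linarith) (by omega)
  have hPQ : q ^ (2 * s + 1) ≤ Q := pow_le_pow_right₀ hq1 hm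
  have hδlt1 : δ < 1 := by
    have h3 : 0 < 3 / (q ^ (2 * s + 1) - 1) := by
      apply div_pos (by norm_num) (by linarith)
    linarith
  have ha0 : 0 < a := pow_pos hδ0 m
  have ha1 : a < 1 := pow_lt_one₀ hδ0.le hδlt1 (by omega)
  have haδ : a ≤ δ := by
    calc a = δ ^ m := hadef
    _ ≤ δ ^ 1 := pow_le_pow_of_le_one hδ0.le hδlt1.le hm1
    _ = δ := pow_one δ
  have hWδ : 3 / (Q - 1) ≤ 1 - δ := by
    have h2 : 3 / (Q - 1) ≤ 3 / (q ^ (2 * s + 1) - 1) :=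
      div_le_div_of_nonneg_left (by norm_num) (by linarith) (by linarith)
    linarith
  have hWa : 3 ≤ (1 - a) * (Q - 1) := by
    have h3 : 3 / (Q - 1) ≤ 1 - a := by linarith
    rw [div_le_iff₀ hQ1'] at h3
    linarith [h3]
  have hW0 : (0:ℝ) < (1 - a) * (Q - 1) := by linarith
  -- u and basic facts
  set u : ℝ := a / Q with hudef
  have hu0 : 0 < u := div_pos ha0 hQ0
  have hQu : Q * u = a := by
    rw [hudef]; field_simp
  have hu_half : u ≤ 1 / 2 := by
    rw [hudef, div_le_iff₀ hQ0]
    nlinarith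
  have hu1 : u < 1 := by linarith
  have hx : ∀ n : ℕ, 1 ≤ n → |x n| < u ^ n := by
    intro n hn
    have h1 := hp (n * m) (Nat.one_le_iff_ne_zero.mpr (by positivity))
    have h2 : δ ^ (n * m) / q ^ (n * m) = u ^ n := by
      rw [hudef, hQdef, hadef, div_pow, ← pow_mul, ← pow_mul, mul_comm m n]
    rw [← h2]
    exact h1
  -- the point t₀
  have hxt : x 1 = p m := by
    simp [hxdef]
  have ht₀u : |p m| < u := by
    have := hx 1 le_rfl
    rw [hxt, pow_one] at this
    exact this
  have h1t₀ : (0:ℝ) < 1 + p m := by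
    have := abs_lt.mp ht₀u
    linarith
  -- positivity of bases for n ≥ 2
  have hxn : ∀ n : ℕ, 2 ≤ n → |x n| < u ^ n ∧ |x n| ≤ 1 / 2 ∧ (0:ℝ) < 1 + x n := by
    intro n hn
    have h1 := hx n (by omega)
    have h2 : u ^ n ≤ u := by
      calc u ^ n ≤ u ^ 1 := pow_le_pow_of_le_one hu0.le hu1.le (by omega)
      _ = u := pow_one u
    have h3 : |x n| ≤ 1 / 2 := by linarith
    have h4 := abs_lt.mp h1
    exact ⟨h1, h3, by nlinarith⟩
  -- the log series L
  set L : ℕ → ℝ := fun n => if n ≤ 1 then 0 else MFun Q n * Real.log (1 + x n) with hLdef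
  have hLabs : ∀ n : ℕ, |L n| ≤ 2 * a ^ n := by
    intro n
    by_cases hn : n ≤ 1
    · simp only [hLdef, if_pos hn, abs_zero]
      positivity
    · push_neg at hn
      have hn2 : 2 ≤ n := hn
      obtain ⟨h1, h2, h3⟩ := hxn n hn2
      have hLn : L n = MFun Q n * Real.log (1 + x n) := by
        simp only [hLdef]
        rw [if_neg (by omega : ¬ n ≤ 1)]
      rw [hLn, abs_mul]
      have hM : |MFun Q n| ≤ Q ^ n := by
        rw [MFun_eq_nMu, abs_mul, abs_of_pos (a := 1 / (n:ℝ)) (by positivity)]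
        have := nMu_abs_le (by linarith : (1:ℝ) ≤ Q) n
        rw [div_mul_eq_mul_div, one_mul, div_le_iff₀ (by positivity : (0:ℝ) < (n:ℝ))]
        linarith [this]
      have hlog : |Real.log (1 + x n)| ≤ 2 * |x n| := abs_log_one_add_le' h2
      calc |MFun Q n| * |Real.log (1 + x n)| ≤ Q ^ n * (2 * |x n|) := by
            apply mul_le_mul hM hlog (abs_nonneg _) (by positivity)
      _ ≤ Q ^ n * (2 * u ^ n) := by
            apply mul_le_mul_of_nonneg_left (by linarith) (by positivity)
      _ = 2 * a ^ n := by rw [← hQu, mul_pow]; ring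
  have hgeo : Summable (fun n : ℕ => 2 * a ^ n) :=
    (summable_geometric_of_lt_one ha0.le ha1).mul_left 2
  have hLsum : Summable L := by
    rw [← summable_abs_iff]
    exact Summable.of_nonneg_of_le (fun n => abs_nonneg _) (fun n => hLabs n) hgeo
  set S : ℝ := ∑' n, L n with hSdef
  have hS : HasSum L S := hLsum.hasSum
  -- the comparison series b
  set b : ℕ → ℝ := fun n => if n ≤ 1 then 0 else a ^ n / n with hbdef
  have hlog1 : HasSum (fun n : ℕ => a ^ (n + 1) / (n + 1)) (-Real.log (1 - a)) :=
    Real.hasSum_pow_div_log_of_abs_lt_one (by rw [abs_of_pos ha0]; exact ha1)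
  have hlog2 : HasSum (fun n : ℕ => a ^ (n + 2) / ((n:ℝ) + 2)) (-Real.log (1 - a) - a) := by
    have h := (hasSum_nat_add_iff' (f := fun n : ℕ => a ^ (n + 1) / ((n:ℝ) + 1)) 1).mpr hlog1
    simp only [Finset.range_one, Finset.sum_singleton, Nat.cast_zero] at h
    norm_num at h
    convert h using 2 with n
    push_cast
    · rfl
    · ring_nf
  have hbsum : HasSum b (-Real.log (1 - a) - a) := by
    have h2 : (fun n : ℕ => b (n + 2)) = fun n : ℕ => a ^ (n + 2) / ((n:ℝ) + 2) := by
      funext n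
      simp only [hbdef, if_neg (by omega : ¬ n + 2 ≤ 1)]
      push_cast
      ring
    have h3 := (hasSum_nat_add_iff (f := b) 2).mp (by rw [h2]; exact hlog2)
    have h4 : ∑ i ∈ Finset.range 2, b i = 0 := by
      rw [Finset.sum_range_succ, Finset.sum_range_one]
      norm_num [hbdef]
    rw [h4, add_zero] at h3
    exact h3
  -- termwise comparison L ≤ b
  have hLb : ∀ n : ℕ, L n ≤ b n := by
    intro n
    by_cases hn : n ≤ 1
    · simp [hLdef, hbdef, hn]
    · push_neg at hn
      have hn2 : 2 ≤ n := hn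
      obtain ⟨h1, h2, h3⟩ := hxn n hn2
      have hLn : L n = MFun Q n * Real.log (1 + x n) := by
        simp only [hLdef]
        rw [if_neg (by omega : ¬ n ≤ 1)]
      have hbn : b n = a ^ n / n := by
        simp only [hbdef]
        rw [if_neg (by omega : ¬ n ≤ 1)]
      rw [hLn, hbn]
      have hM0 : 0 ≤ MFun Q n := by
        rw [MFun_eq_nMu]
        exact mul_nonneg (by positivity) (nMu_nonneg hQ2 (by omega))
      have hMle : nMu Q n ≤ Q ^ n := by
        have hmem : n ∈ n.divisors := Nat.mem_divisors_self n (by omega)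
        have h := Finset.single_le_sum (f := fun d => nMu Q d)
          (fun d hd => nMu_nonneg hQ2 (Nat.pos_of_mem_divisors hd)) hmem
        rw [sum_nMu Q n (by omega)] at h
        exact h
      have hlog : Real.log (1 + x n) ≤ u ^ n := by
        have h4 := Real.log_le_sub_one_of_pos h3
        have h5 := le_abs_self (x n)
        linarith
      calc MFun Q n * Real.log (1 + x n) ≤ MFun Q n * u ^ n :=
            mul_le_mul_of_nonneg_left hlog hM0
      _ = nMu Q n * u ^ n * (1 / (n:ℝ)) := by rw [MFun_eq_nMu]; ring
      _ ≤ Q ^ n * u ^ n * (1 / (n:ℝ)) := by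
            apply mul_le_mul_of_nonneg_right _ (by positivity)
            exact mul_le_mul_of_nonneg_right hMle (by positivity)
      _ = a ^ n / n := by rw [← mul_pow, hQu]; ring
  have hSle : S ≤ -Real.log (1 - a) - a := by
    rw [hSdef, ← hbsum.tsum_eq]
    exact Summable.tsum_le_tsum hLb hLsum hbsum.summable
  -- the infinite product
  set A : ℕ → ℝ := fun n => if n = 1 then 1 else (1 + x n) ^ (MFun Q n) with hAdef
  have hAL : A = fun n => Real.exp (L n) := by
    funext n
    by_cases h0 : n = 0
    · subst h0
      have hM0 : MFun Q 0 = 0 := by simp [MFun]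
      simp [hAdef, hLdef, hM0, Real.rpow_zero]
    · by_cases h1 : n = 1
      · subst h1
        simp [hAdef, hLdef]
      · have hn2 : 2 ≤ n := by omega
        obtain ⟨_, _, h3⟩ := hxn n hn2
        simp only [hAdef, hLdef, if_neg h1, if_neg (by omega : ¬ n ≤ 1)]
        rw [Real.rpow_def_of_pos h3, mul_comm]
  have hAprod : HasProd A (Real.exp S) := by
    rw [hAL]; exact hasProd_exp' hS
  have hMQ1 : MFun Q 1 = Q := by
    simp [MFun, Nat.divisors_one]
  have hHt : ∀ t : ℝ, HasProd (fun n => (1 + Function.update x 1 t n) ^ (MFun Q n))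
      (Real.exp S * (1 + t) ^ Q) := by
    intro t
    have hB : HasProd (fun n : ℕ => if n = 1 then (1 + t) ^ Q else 1) ((1 + t) ^ Q) :=
      hasProd_ite_eq 1 _
    have heq : (fun n => (1 + Function.update x 1 t n) ^ (MFun Q n))
        = fun n => A n * (if n = 1 then (1 + t) ^ Q else 1) := by
      funext n
      by_cases hn : n = 1
      · subst hn
        simp [hAdef, Function.update_self, hMQ1]
      · simp [hAdef, hn, Function.update_of_ne hn]
    rw [heq]
    exact hAprod.mul hB
  have hc1 : (fun t : ℝ => c1Fun Q (Function.update x 1 t))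
      = fun t : ℝ => Q * t / (Q - 1) - (Real.exp S * (1 + t) ^ Q - 1) / (Q * (Q - 1)) := by
    funext t
    rw [c1Fun, Hfun, (hHt t).tprod_eq, Function.update_self]
  -- the derivative
  have hd2 : HasDerivAt (fun t : ℝ => 1 + t) 1 (p m) := (hasDerivAt_id (p m)).const_add 1
  have hd3 : HasDerivAt (fun t : ℝ => (1 + t) ^ Q) (1 * Q * (1 + p m) ^ (Q - 1)) (p m) :=
    hd2.rpow_const (Or.inl (ne_of_gt h1t₀))
  have hd4 := ((hd3.const_mul (Real.exp S)).sub_const 1).div_const (Q * (Q - 1))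
  have hd1 : HasDerivAt (fun t : ℝ => Q * t / (Q - 1)) (Q * 1 / (Q - 1)) (p m) :=
    ((hasDerivAt_id (p m)).const_mul Q).div_const (Q - 1)
  have hD : HasDerivAt
      (fun t : ℝ => Q * t / (Q - 1) - (Real.exp S * (1 + t) ^ Q - 1) / (Q * (Q - 1)))
      (Q * 1 / (Q - 1) - Real.exp S * (1 * Q * (1 + p m) ^ (Q - 1)) / (Q * (Q - 1))) (p m) :=
    hd1.sub hd4
  set E : ℝ := Real.exp S * (1 + p m) ^ (Q - 1) with hEdef
  set D₀ : ℝ := Q * 1 / (Q - 1) - Real.exp S * (1 * Q * (1 + p m) ^ (Q - 1)) / (Q * (Q - 1))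
    with hD₀def
  have hE0 : 0 < E := by
    rw [hEdef]
    exact mul_pos (Real.exp_pos S) (Real.rpow_pos_of_pos h1t₀ _)
  have hDval : D₀ = (Q - E) / (Q - 1) := by
    rw [hD₀def, hEdef]
    field_simp
  -- bound on E
  have hElt : E < (1 - a)⁻¹ := by
    have hEexp : E = Real.exp (S + Real.log (1 + p m) * (Q - 1)) := by
      rw [hEdef, Real.rpow_def_of_pos h1t₀, ← Real.exp_add]
    have hlogt : Real.log (1 + p m) ≤ u := by
      have h4 := Real.log_le_sub_one_of_pos h1t₀
      have h5 := le_abs_self (p m)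
      linarith
    have hexp : S + Real.log (1 + p m) * (Q - 1) < -Real.log (1 - a) := by
      have h1 : Real.log (1 + p m) * (Q - 1) ≤ u * (Q - 1) :=
        mul_le_mul_of_nonneg_right hlogt (by linarith)
      have h2 : u * (Q - 1) = a - u := by rw [← hQu]; ring
      linarith
    rw [hEexp]
    calc Real.exp (S + Real.log (1 + p m) * (Q - 1)) < Real.exp (-Real.log (1 - a)) :=
          Real.exp_lt_exp.mpr hexp
    _ = (1 - a)⁻¹ := by rw [Real.exp_neg, Real.exp_log (by linarith)]
  -- the comparison value G
  set G : ℝ := (Q - a ^ 2) / ((1 - a) * (Q - 1)) with hGdef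
  have hEa : E * (1 - a) < 1 := by
    have h := mul_lt_mul_of_pos_right hElt (by linarith : (0:ℝ) < 1 - a)
    rwa [inv_mul_cancel₀ (by linarith : (1:ℝ) - a ≠ 0)] at h
  have ha2 : a ^ 2 < 1 := by nlinarith
  have hEG : E < G := by
    rw [hGdef, lt_div_iff₀ hW0]
    have hstep := mul_lt_mul_of_pos_right hEa hQ1'
    rw [one_mul] at hstep
    nlinarith [hstep, ha2]
  have hGQ : G < Q := by
    rw [hGdef, div_lt_iff₀ hW0]
    nlinarith
  have hRval : Q / (Q - 1) * (1 - (1 - Q⁻¹ * a ^ 2) / (Q * (1 - a) * (1 - Q⁻¹)))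
      = (Q - G) / (Q - 1) := by
    rw [hGdef]
    have hQne : Q ≠ 0 := by linarith
    have hQ1ne : Q - 1 ≠ 0 := by linarith
    have hane : 1 - a ≠ 0 := by linarith
    field_simp
  refine ⟨D₀, ?_, ?_, ?_⟩
  · rw [hc1]
    exact hD
  · rw [hRval, hDval]
    have h1 : (Q - G) / (Q - 1) < (Q - E) / (Q - 1) := by
      rw [div_lt_div_iff₀ hQ1' hQ1']
      nlinarith [hEG, hQ1']
    calc (Q - G) / (Q - 1) < (Q - E) / (Q - 1) := h1
    _ ≤ |(Q - E) / (Q - 1)| := le_abs_self _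
  · rw [hRval]
    apply div_pos (by linarith) hQ1'
end

section
/- Let q > 1 be a real number and let u be a real number with 0 ≤ u and qu < 1. Then the family n ↦ (1 + u^n)^{s_n(q)/n} (n ≥ 1) is multipliable and ∏_{n=1}^∞ (1 + u^n)^{s_n(q)/n} = (1 + u)(1 − q u²)/(1 − q u). -/
/-! ### Auxiliary definitions -/

/-- The "uncorrected" Möbius-type coefficient `a_n(q) = ∑_{d ∣ n} μ(n/d) q^d`. -/
noncomputable def aFun (q : ℝ) (n : ℕ) : ℝ :=
  ∑ d ∈ n.divisors, (ArithmeticFunction.moebius (n / d) : ℝ) * q ^ d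

/-- The partial logarithmic terms. -/
noncomputable def Lp (q u : ℝ) (n : ℕ) : ℝ := aFun q n / n * Real.log (1 + u ^ n)

/-- The double-series terms. -/
noncomputable def Gf (q u : ℝ) (p : ℕ × ℕ) : ℝ :=
  aFun q (p.1 + 1) / (p.1 + 1) * ((-1) ^ p.2 * (u ^ (p.1 + 1)) ^ (p.2 + 1) / (p.2 + 1))

/-- The coefficient of `u^m/m` after regrouping. -/
noncomputable def cf (q : ℝ) (m : ℕ) : ℝ :=
  ∑ x ∈ m.divisorsAntidiagonal, aFun q x.1 * (-1) ^ (x.2 + 1)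

lemma aFun_zero (q : ℝ) : aFun q 0 = 0 := by simp [aFun]

lemma aFun_one (q : ℝ) : aFun q 1 = q := by
  simp [aFun]

lemma sum_aFun (q : ℝ) : ∀ n > 0, ∑ d ∈ n.divisors, aFun q d = q ^ n := by
  rw [ArithmeticFunction.sum_eq_iff_sum_smul_moebius_eq]
  intro n hn
  rw [Nat.sum_divisorsAntidiagonal' (f := fun x y => (ArithmeticFunction.moebius x : ℤ) • (q ^ y))]
  simp [aFun, zsmul_eq_mul]

lemma abs_aFun_le {q : ℝ} (hq : 1 ≤ q) (n : ℕ) : |aFun q n| ≤ n * q ^ n := by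
  rcases Nat.eq_zero_or_pos n with rfl | hn
  · simp [aFun_zero]
  have hq0 : (0:ℝ) ≤ q := le_trans zero_le_one hq
  have hcard : n.divisors.card ≤ n := by
    have hsub : n.divisors ⊆ Finset.Icc 1 n := fun d hd =>
      Finset.mem_Icc.mpr ⟨Nat.pos_of_mem_divisors hd, Nat.divisor_le hd⟩
    simpa using Finset.card_le_card hsub
  calc |aFun q n| ≤ ∑ d ∈ n.divisors, |(ArithmeticFunction.moebius (n / d) : ℝ) * q ^ d| :=
        Finset.abs_sum_le_sum_abs _ _
    _ ≤ ∑ d ∈ n.divisors, q ^ n := by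
        refine Finset.sum_le_sum fun d hd => ?_
        rw [abs_mul, abs_pow, abs_of_nonneg hq0]
        have h1 : |((ArithmeticFunction.moebius (n / d) : ℤ) : ℝ)| ≤ 1 := by
          rw [← Int.cast_abs]
          exact_mod_cast ArithmeticFunction.abs_moebius_le_one
        have h2 : q ^ d ≤ q ^ n := pow_le_pow_right₀ hq (Nat.divisor_le hd)
        have h3 : (0:ℝ) ≤ q ^ d := pow_nonneg hq0 d
        exact le_trans (mul_le_of_le_one_left h3 h1) h2
    _ = n.divisors.card * q ^ n := by rw [Finset.sum_const, nsmul_eq_mul]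
    _ ≤ n * q ^ n := by
        have : (n.divisors.card : ℝ) ≤ (n : ℝ) := by exact_mod_cast hcard
        exact mul_le_mul_of_nonneg_right this (pow_nonneg hq0 n)

lemma hasSum_log_one_add {x : ℝ} (h0 : 0 ≤ x) (h1 : x < 1) :
    HasSum (fun k : ℕ => (-1) ^ k * x ^ (k + 1) / (k + 1)) (Real.log (1 + x)) := by
  have h : |(-x)| < 1 := by rwa [abs_neg, abs_of_nonneg h0]
  have H := (Real.hasSum_pow_div_log_of_abs_lt_one h).neg
  rw [neg_neg, sub_neg_eq_add] at H
  have hfun : (fun k : ℕ => (-1:ℝ) ^ k * x ^ (k + 1) / (k + 1))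
      = fun k : ℕ => -((-x) ^ (k + 1) / (k + 1)) := by
    funext k
    rw [neg_pow, pow_succ]
    ring
  rw [hfun]
  exact H

lemma hasSum_geom_div {r : ℝ} (h0 : 0 ≤ r) (h1 : r < 1) :
    HasSum (fun m : ℕ => r ^ m / m) (-Real.log (1 - r)) := by
  have h : |r| < 1 := by rwa [abs_of_nonneg h0]
  have H := Real.hasSum_pow_div_log_of_abs_lt_one h
  have H' : HasSum (fun n : ℕ => r ^ (n + 1) / ((n + 1 : ℕ) : ℝ)) (-Real.log (1 - r)) := by
    simpa using H
  have := (hasSum_nat_add_iff (f := fun m : ℕ => r ^ m / (m : ℝ)) 1).mp H'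
  simpa using this

/-- The regrouping bijection. -/
def divE : (Σ m : ℕ, {x : ℕ × ℕ // x ∈ m.divisorsAntidiagonal}) ≃ ℕ × ℕ where
  toFun x := (x.2.1.1 - 1, x.2.1.2 - 1)
  invFun p := ⟨(p.1 + 1) * (p.2 + 1), ⟨(p.1 + 1, p.2 + 1),
      Nat.mem_divisorsAntidiagonal.mpr ⟨rfl, Nat.mul_ne_zero (Nat.succ_ne_zero _)
        (Nat.succ_ne_zero _)⟩⟩⟩
  left_inv := by
    rintro ⟨m, ⟨⟨d, e⟩, h⟩⟩
    obtain ⟨hde, hm⟩ := Nat.mem_divisorsAntidiagonal.mp h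
    have hd : 1 ≤ d := Nat.pos_of_ne_zero (by rintro rfl; exact hm (by simpa using hde.symm))
    have he : 1 ≤ e := Nat.pos_of_ne_zero (by rintro rfl; exact hm (by simpa using hde.symm))
    have h1 : d - 1 + 1 = d := Nat.sub_add_cancel hd
    have h2 : e - 1 + 1 = e := Nat.sub_add_cancel he
    subst hde
    dsimp only
    refine Sigma.ext ?_ ?_
    · show (d - 1 + 1) * (e - 1 + 1) = d * e
      rw [h1, h2]
    refine (Subtype.heq_iff_coe_eq ?_).mpr ?_
    · intro x
      show x ∈ ((d - 1 + 1) * (e - 1 + 1)).divisorsAntidiagonal ↔ x ∈ (d * e).divisorsAntidiagonal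
      rw [h1, h2]
    · show ((d - 1 + 1, e - 1 + 1) : ℕ × ℕ) = (d, e)
      rw [h1, h2]
  right_inv := by
    rintro ⟨n, k⟩
    simp

lemma cf_eq (q : ℝ) {m : ℕ} (hm : m ≠ 0) :
    cf q m = q ^ m - (if 2 ∣ m then 2 * q ^ (m / 2) else 0) := by
  have h1 : cf q m = ∑ d ∈ m.divisors, aFun q d * (-1) ^ (m / d + 1) :=
    Nat.sum_divisorsAntidiagonal (f := fun x y => aFun q x * (-1) ^ (y + 1))
  rw [h1]
  have h2 : ∀ d ∈ m.divisors, aFun q d * (-1:ℝ) ^ (m / d + 1)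
      = aFun q d - (if Even (m / d) then 2 * aFun q d else 0) := by
    intro d _
    rcases Nat.even_or_odd (m / d) with he | ho
    · rw [if_pos he, (he.add_one).neg_one_pow]
      ring
    · rw [if_neg (by rintro ⟨r, hr⟩; obtain ⟨k, hk⟩ := ho; omega), (ho.add_one).neg_one_pow]
      ring
  rw [Finset.sum_congr rfl h2, Finset.sum_sub_distrib, sum_aFun q m (Nat.pos_of_ne_zero hm)]
  congr 1
  rw [← Finset.sum_filter]
  by_cases hc : 2 ∣ m
  · rw [if_pos hc]
    obtain ⟨t, rfl⟩ := hc
    have ht : t ≠ 0 := by rintro rfl; exact hm (by ring)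
    have htpos : 0 < t := Nat.pos_of_ne_zero ht
    have hfe : (2 * t).divisors.filter (fun d => Even (2 * t / d)) = t.divisors := by
      ext d
      simp only [Finset.mem_filter, Nat.mem_divisors]
      constructor
      · rintro ⟨⟨hd, hne⟩, heven⟩
        obtain ⟨s, hs⟩ := heven
        refine ⟨⟨s, ?_⟩, ht⟩
        have key : 2 * t = d * (2 * s) := by
          calc 2 * t = (2 * t / d) * d := (Nat.div_mul_cancel hd).symm
            _ = (s + s) * d := by rw [hs]
            _ = d * (2 * s) := by ring
        have key' : 2 * t = 2 * (d * s) := by rw [key]; ring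
        exact Nat.eq_of_mul_eq_mul_left (by norm_num) key'
      · rintro ⟨⟨s, hs⟩, -⟩
        subst hs
        have hd0 : d ≠ 0 := by rintro rfl; simp at ht
        refine ⟨⟨⟨2 * s, by ring⟩, hm⟩, ?_⟩
        have hdiv : 2 * (d * s) / d = 2 * s := by
          rw [show 2 * (d * s) = d * (2 * s) by ring,
            Nat.mul_div_cancel_left _ (Nat.pos_of_ne_zero hd0)]
        rw [hdiv]
        exact ⟨s, by ring⟩
    rw [hfe, ← Finset.mul_sum, sum_aFun q t htpos]
    have h2t : 2 * t / 2 = t := by omega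
    rw [h2t]
  · rw [if_neg hc]
    have hempty : (m.divisors.filter fun d => Even (m / d)) = ∅ := by
      rw [Finset.filter_eq_empty_iff]
      intro d hd heven
      obtain ⟨hdvd, -⟩ := Nat.mem_divisors.mp hd
      exact hc (dvd_trans (even_iff_two_dvd.mp heven) (Nat.div_dvd_of_dvd hdvd))
    rw [hempty, Finset.sum_empty]

lemma fiber_sum (q u : ℝ) (m : ℕ) :
    ∑ x ∈ m.divisorsAntidiagonal, Gf q u (x.1 - 1, x.2 - 1) = u ^ m / m * cf q m := by
  rw [cf, Finset.mul_sum]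
  refine Finset.sum_congr rfl ?_
  rintro ⟨d, e⟩ hx
  obtain ⟨hde, hm⟩ := Nat.mem_divisorsAntidiagonal.mp hx
  have hd : 1 ≤ d := Nat.pos_of_ne_zero (by rintro rfl; exact hm (by simpa using hde.symm))
  have he : 1 ≤ e := Nat.pos_of_ne_zero (by rintro rfl; exact hm (by simpa using hde.symm))
  simp only [Gf]
  rw [Nat.sub_add_cancel hd, Nat.sub_add_cancel he]
  have hsign : ((-1:ℝ)) ^ (e - 1) = (-1) ^ (e + 1) := by
    conv_rhs => rw [show e + 1 = (e - 1) + 2 by omega]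
    rw [pow_add]
    norm_num
  rw [hsign, ← pow_mul, hde]
  have hdR : ((d:ℝ)) ≠ 0 := Nat.cast_ne_zero.mpr (by omega)
  have heR : ((e:ℝ)) ≠ 0 := Nat.cast_ne_zero.mpr (by omega)
  have hmm : ((m:ℝ)) = (d : ℝ) * e := by exact_mod_cast hde.symm
  field_simp [hmm]
  rw [Nat.cast_sub hd, Nat.cast_sub he, hmm]
  push_cast
  ring

/-- For `q > 1` and `0 ≤ u` with `q·u < 1`, the family `n ↦ (1 + u^n)^{s_n(q)/n}` (for `n ≥ 1`;
the `n = 0` factor has exponent `0/0 = 0` and hence equals `1`) is multipliable and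
`∏_{n ≥ 1} (1 + u^n)^{s_n(q)/n} = (1 + u)(1 − q u²)/(1 − q u)`.
Here `x ^ a` is the real power `Real.rpow`. -/
theorem multipliable_and_tprod_eval (q u : ℝ) (hq : 1 < q) (hu0 : 0 ≤ u) (hu1 : q * u < 1) :
    Multipliable (fun n : ℕ => (1 + u ^ n) ^ (sFun q n / (n : ℝ))) ∧
    ∏' n : ℕ, (1 + u ^ n) ^ (sFun q n / (n : ℝ))
      = (1 + u) * (1 - q * u ^ 2) / (1 - q * u) := by
  classical
  have hq0 : (0:ℝ) < q := lt_trans one_pos hq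
  have hu_lt1 : u < 1 := by nlinarith
  have hqu0 : 0 ≤ q * u := mul_nonneg hq0.le hu0
  have h1 : (0:ℝ) < 1 - q * u := by linarith
  have hqu2 : q * u ^ 2 < 1 := by nlinarith
  have hqu2_0 : 0 ≤ q * u ^ 2 := by positivity
  have h2 : (0:ℝ) < 1 - q * u ^ 2 := by linarith
  have h3 : (0:ℝ) < 1 + u := by linarith
  set S : ℝ := Real.log (1 - q * u ^ 2) - Real.log (1 - q * u) with hS
  -- Summability of the double series
  have hGsummable : Summable (Gf q u) := by
    have hmaj : Summable (fun p : ℕ × ℕ => (q * u) ^ (p.1 + 1) * u ^ p.2) := by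
      have hf : Summable (fun n : ℕ => (q * u) ^ (n + 1)) :=
        ((summable_geometric_of_lt_one hqu0 hu1).mul_right (q * u)).congr
          (fun n => (pow_succ _ _).symm)
      have hg : Summable (fun k : ℕ => u ^ k) := summable_geometric_of_lt_one hu0 hu_lt1
      exact hf.mul_of_nonneg hg (fun n => pow_nonneg hqu0 _) (fun k => pow_nonneg hu0 _)
    refine summable_abs_iff.mp (Summable.of_nonneg_of_le (fun p => abs_nonneg _) ?_ hmaj)
    rintro ⟨n, k⟩
    have e1 : |aFun q (n + 1) / ((n : ℝ) + 1)| ≤ q ^ (n + 1) := by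
      rw [abs_div, abs_of_pos (by positivity : (0:ℝ) < (n : ℝ) + 1),
        div_le_iff₀ (by positivity)]
      have := abs_aFun_le hq.le (n + 1)
      push_cast at this ⊢
      linarith
    have e2 : |(-1:ℝ) ^ k * (u ^ (n + 1)) ^ (k + 1) / ((k : ℝ) + 1)|
        ≤ u ^ (n + 1) * u ^ k := by
      have hnn : (0:ℝ) ≤ (u ^ (n + 1)) ^ (k + 1) := by positivity
      rw [abs_div, abs_mul, abs_pow (-1 : ℝ) k, abs_neg, abs_one, one_pow, one_mul,
        abs_pow (u ^ (n + 1)) (k + 1), abs_pow u (n + 1), abs_of_nonneg hu0,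
        abs_of_pos (by positivity : (0:ℝ) < (k : ℝ) + 1)]
      have hb : (u ^ (n + 1)) ^ (k + 1) ≤ u ^ (n + 1) * u ^ k := by
        rw [← pow_mul, ← pow_add]
        refine pow_le_pow_of_le_one hu0 hu_lt1.le ?_
        calc n + 1 + k ≤ (n + 1) + (n + 1) * k :=
              add_le_add le_rfl (Nat.le_mul_of_pos_left k (Nat.succ_pos n))
          _ = (n + 1) * (k + 1) := by ring
      calc (u ^ (n + 1)) ^ (k + 1) / ((k : ℝ) + 1) ≤ (u ^ (n + 1)) ^ (k + 1) :=
            div_le_self hnn (by linarith [Nat.cast_nonneg (α := ℝ) k])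
        _ ≤ u ^ (n + 1) * u ^ k := hb
    calc |Gf q u (n, k)|
        = |aFun q (n + 1) / ((n : ℝ) + 1)|
          * |(-1:ℝ) ^ k * (u ^ (n + 1)) ^ (k + 1) / ((k : ℝ) + 1)| := by
          rw [Gf, abs_mul]
      _ ≤ q ^ (n + 1) * (u ^ (n + 1) * u ^ k) := by
          exact mul_le_mul e1 e2 (abs_nonneg _) (by positivity)
      _ = (q * u) ^ (n + 1) * u ^ k := by rw [mul_pow]; ring
  -- Row sums
  have hrow : ∀ n : ℕ, HasSum (fun k => Gf q u (n, k)) (Lp q u (n + 1)) := by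
    intro n
    have hx0 : 0 ≤ u ^ (n + 1) := pow_nonneg hu0 _
    have hx1 : u ^ (n + 1) < 1 := pow_lt_one₀ hu0 hu_lt1 (Nat.succ_ne_zero n)
    have H := (hasSum_log_one_add hx0 hx1).mul_left (aFun q (n + 1) / ((n : ℝ) + 1))
    simp only [Gf, Lp]
    convert H using 2
    · rfl
    push_cast
    ring
  -- The coefficient series
  have hcsum : HasSum (fun m : ℕ => u ^ m / m * cf q m) S := by
    have A : HasSum (fun m : ℕ => (q * u) ^ m / m) (-Real.log (1 - q * u)) :=
      hasSum_geom_div hqu0 hu1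
    have B : HasSum (fun m : ℕ => if 2 ∣ m then 2 * q ^ (m / 2) * u ^ m / m else 0)
        (-Real.log (1 - q * u ^ 2)) := by
      have C : HasSum (fun t : ℕ => (q * u ^ 2) ^ t / t) (-Real.log (1 - q * u ^ 2)) :=
        hasSum_geom_div hqu2_0 hqu2
      have hinj : Function.Injective (fun t : ℕ => 2 * t) := fun a b h =>
        Nat.eq_of_mul_eq_mul_left (by norm_num) h
      have hzero : ∀ m : ℕ, m ∉ Set.range (fun t : ℕ => 2 * t) →
          (if 2 ∣ m then 2 * q ^ (m / 2) * u ^ m / (m : ℝ) else 0) = 0 := by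
        intro m hmr
        rw [if_neg]
        rintro ⟨t, rfl⟩
        exact hmr ⟨t, rfl⟩
      refine (Function.Injective.hasSum_iff hinj hzero).mp ?_
      have hcomp : ((fun m : ℕ => if 2 ∣ m then 2 * q ^ (m / 2) * u ^ m / (m : ℝ) else 0)
            ∘ fun t : ℕ => 2 * t)
          = fun t : ℕ => (q * u ^ 2) ^ t / t := by
        funext t
        simp only [Function.comp]
        rw [if_pos ⟨t, rfl⟩]
        rcases Nat.eq_zero_or_pos t with rfl | ht
        · simp
        · have hdiv : 2 * t / 2 = t := by omega
          rw [hdiv]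
          push_cast
          rw [pow_mul u 2 t, mul_pow]
          have htR : ((t : ℝ)) ≠ 0 := Nat.cast_ne_zero.mpr (by omega)
          field_simp
      rw [hcomp]
      exact C
    have key : (fun m : ℕ => u ^ m / m * cf q m)
        = fun m : ℕ => (q * u) ^ m / m - (if 2 ∣ m then 2 * q ^ (m / 2) * u ^ m / m else 0) := by
      funext m
      rcases eq_or_ne m 0 with rfl | hm
      · simp [cf]
      · rw [cf_eq q hm]
        split_ifs with hdvd
        · rw [mul_pow]; ring
        · rw [mul_pow]; ring
    have H := A.sub B
    rw [show -Real.log (1 - q * u) - -Real.log (1 - q * u ^ 2) = S by rw [hS]; ring] at H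
    exact key ▸ H
  -- Regroup via the bijection
  have hfib : ∀ m : ℕ, HasSum
      (fun c : {x : ℕ × ℕ // x ∈ m.divisorsAntidiagonal} => Gf q u (divE ⟨m, c⟩))
      (u ^ m / m * cf q m) := by
    intro m
    have hfin := hasSum_fintype
      (fun c : {x : ℕ × ℕ // x ∈ m.divisorsAntidiagonal} => Gf q u (divE ⟨m, c⟩))
    have heq : ∑ c : {x : ℕ × ℕ // x ∈ m.divisorsAntidiagonal}, Gf q u (divE ⟨m, c⟩)
        = ∑ x ∈ m.divisorsAntidiagonal, Gf q u (x.1 - 1, x.2 - 1) :=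
      Finset.sum_coe_sort m.divisorsAntidiagonal (fun x => Gf q u (x.1 - 1, x.2 - 1))
    rwa [heq, fiber_sum q u m] at hfin
  have hSigSummable : Summable (fun x : (Σ m : ℕ, {x : ℕ × ℕ // x ∈ m.divisorsAntidiagonal})
      => Gf q u (divE x)) := divE.summable_iff.mpr hGsummable
  have hSig : HasSum (fun x : (Σ m : ℕ, {x : ℕ × ℕ // x ∈ m.divisorsAntidiagonal})
      => Gf q u (divE x)) S :=
    HasSum.sigma_of_hasSum hcsum hfib hSigSummable
  have hGS : HasSum (Gf q u) S := divE.hasSum_iff.mp hSig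
  -- Sum over rows
  have hrows : HasSum (fun n => Lp q u (n + 1)) S := hGS.prod_fiberwise hrow
  have hLp0 : Lp q u 0 = 0 := by simp [Lp, aFun_zero]
  have hLp : HasSum (Lp q u) S := by
    have := (hasSum_nat_add_iff (f := Lp q u) 1).mp hrows
    simpa [hLp0] using this
  -- Add the correction at n = 1
  have hind : HasSum (fun n : ℕ => if n = 1 then Real.log (1 + u) else 0) (Real.log (1 + u)) :=
    hasSum_ite_eq 1 _
  have hLfull : HasSum (fun n : ℕ => sFun q n / n * Real.log (1 + u ^ n))
      (S + Real.log (1 + u)) := by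
    have H := hLp.add hind
    have hfun : (fun n : ℕ => Lp q u n + if n = 1 then Real.log (1 + u) else 0)
        = fun n : ℕ => sFun q n / n * Real.log (1 + u ^ n) := by
      funext n
      by_cases hn : n = 1
      · subst hn
        simp only [Lp, sFun, aFun_one, Nat.cast_one, pow_one, div_one, eq_self_iff_true,
          if_true]
        ring
      · simp [Lp, sFun, hn, aFun]
    rwa [hfun] at H
  -- Exponentiate
  have hprod := hLfull.rexp
  rw [Function.comp_def] at hprod
  have hfun2 : (fun n : ℕ => Real.exp (sFun q n / n * Real.log (1 + u ^ n)))
      = fun n : ℕ => (1 + u ^ n) ^ (sFun q n / (n : ℝ)) := by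
    funext n
    have hpos : (0:ℝ) < 1 + u ^ n := by positivity
    rw [Real.rpow_def_of_pos hpos, mul_comm]
  have hval : Real.exp (S + Real.log (1 + u)) = (1 + u) * (1 - q * u ^ 2) / (1 - q * u) := by
    rw [Real.exp_add, hS, Real.exp_sub, Real.exp_log h2, Real.exp_log h1, Real.exp_log h3]
    ring
  rw [hfun2, hval] at hprod
  exact ⟨hprod.multipliable, hprod.tprod_eq⟩
end
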